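/- arXiv:2312.12843 — 10 statements merged into one kernel-verified Lean document; each statement's English description precedes it below -/
import Mathlib

section
/- Let Γ1 be a signed graph on n1 vertices and Γ2 a signed graph on n2 vertices with adjacency matrix A2. Then tr(|A(Γ1⊛Γ2)|³) = n1 · tr(|A2|³) + 3·n1·Σ_{i,j} |A2(i,j)|; equivalently, the number of triangles in the underlying graph of Γ1⊛Γ2 equals n1·(t(Γ2) + |E2|), where t(Γ2) is the number of triangles and |E2| the number of edges of the underlying graph of Γ2. -/
open Matrix Kronecker BigOperators

lemma my_trace_fromBlocks {m n R : Type*} [Fintype m] [Fintype n] [AddCommMonoid R]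
    (A : Matrix m m R) (B : Matrix m n R) (C : Matrix n m R) (D : Matrix n n R) :
    (Matrix.fromBlocks A B C D).trace = A.trace + D.trace := by
  simp [Matrix.trace, Fintype.sum_sum_type, Matrix.diag]

/-- The block `μ₂ᵀ ⊗ Φ₁`, where `Φ₁ = diag μ₁` and `μ₂` is regarded as an `n₂×1`
column vector: an `n₁ × (n₂·n₁)` matrix. -/
noncomputable def muBlock {n1 n2 : ℕ} (μ1 : Fin n1 → ℝ) (μ2 : Fin n2 → ℝ) :
    Matrix (Fin n1) (Fin n2 × Fin n1) ℝ :=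
  Matrix.of fun i jk => μ2 jk.1 * Matrix.diagonal μ1 i jk.2

/-- Adjacency matrix of the duplication add vertex corona `Γ₁ ⊛ Γ₂`, in `3×3` block form
`[[0, A₁μ, 0], [A₁μ, 0, μ₂ᵀ⊗Φ₁], [0, μ₂⊗Φ₁, A₂⊗I]]` (blocks of sizes `n₁, n₁, n₁·n₂`),
where `A₁μ = Φ₁·|A₁|·Φ₁` is supplied as a parameter. -/
noncomputable def coronaStar {n1 n2 : ℕ} (A1μ : Matrix (Fin n1) (Fin n1) ℝ)
    (A2 : Matrix (Fin n2) (Fin n2) ℝ) (μ1 : Fin n1 → ℝ) (μ2 : Fin n2 → ℝ) :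
    Matrix ((Fin n1 ⊕ Fin n1) ⊕ Fin n2 × Fin n1)
      ((Fin n1 ⊕ Fin n1) ⊕ Fin n2 × Fin n1) ℝ :=
  Matrix.fromBlocks
    (Matrix.fromBlocks 0 A1μ A1μ 0)
    (Matrix.fromRows (0 : Matrix (Fin n1) (Fin n2 × Fin n1) ℝ) (muBlock μ1 μ2))
    (Matrix.fromCols (0 : Matrix (Fin n2 × Fin n1) (Fin n1) ℝ) (muBlock μ1 μ2)ᵀ)
    (A2 ⊗ₖ (1 : Matrix (Fin n1) (Fin n1) ℝ))

/-- `tr(|A(Γ₁⊛Γ₂)|³) = n₁·tr(|A₂|³) + 3·n₁·Σ_{i,j}|A₂(i,j)|`; equivalently,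
the number of triangles of the underlying graph of `Γ₁⊛Γ₂` is `n₁·(t(Γ₂)+|E₂|)`. -/
theorem corona_triangle_count (n1 n2 : ℕ)
    (A1 : Matrix (Fin n1) (Fin n1) ℝ) (hA1sym : A1.IsSymm) (hA1diag : ∀ i, A1 i i = 0)
    (hA1ent : ∀ i j, A1 i j = 1 ∨ A1 i j = 0 ∨ A1 i j = -1)
    (μ1 : Fin n1 → ℝ) (hμ1 : ∀ i, μ1 i = 1 ∨ μ1 i = -1)
    (A2 : Matrix (Fin n2) (Fin n2) ℝ) (hA2sym : A2.IsSymm) (hA2diag : ∀ i, A2 i i = 0)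
    (hA2ent : ∀ i j, A2 i j = 1 ∨ A2 i j = 0 ∨ A2 i j = -1)
    (μ2 : Fin n2 → ℝ) (hμ2 : ∀ i, μ2 i = 1 ∨ μ2 i = -1) :
    Matrix.trace
        (((coronaStar (Matrix.diagonal μ1 * A1.map abs * Matrix.diagonal μ1) A2 μ1 μ2).map
            abs) ^ 3)
      = (n1 : ℝ) * Matrix.trace ((A2.map abs) ^ 3)
        + 3 * (n1 : ℝ) * ∑ i, ∑ j, |A2 i j| := by
  have habs1 : ∀ i, |μ1 i| = 1 := by
    intro i; rcases hμ1 i with h | h <;> simp [h]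
  have habs2 : ∀ i, |μ2 i| = 1 := by
    intro i; rcases hμ2 i with h | h <;> simp [h]
  set P : Matrix (Fin n1) (Fin n1) ℝ := A1.map abs with hP
  set Q : Matrix (Fin n1) (Fin n2 × Fin n1) ℝ :=
    Matrix.of (fun i jk => if i = jk.2 then (1 : ℝ) else 0) with hQ
  set A2' : Matrix (Fin n2) (Fin n2) ℝ := A2.map abs with hA2'
  set R : Matrix (Fin n2 × Fin n1) (Fin n2 × Fin n1) ℝ :=
    A2' ⊗ₖ (1 : Matrix (Fin n1) (Fin n1) ℝ) with hR
  have hB : (coronaStar (Matrix.diagonal μ1 * A1.map abs * Matrix.diagonal μ1) A2 μ1 μ2).map abs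
      = Matrix.fromBlocks (Matrix.fromBlocks 0 P P 0)
          (Matrix.fromRows 0 Q) (Matrix.fromCols 0 Qᵀ) R := by
    ext i j
    rcases i with (i | i) | ⟨ji, ki⟩ <;> rcases j with (j | j) | ⟨jj, kj⟩ <;>
      simp [coronaStar, muBlock, hP, hQ, hA2', hR, Matrix.diagonal_mul, Matrix.mul_diagonal,
        Matrix.diagonal_apply, abs_mul, habs1, habs2, apply_ite abs, Matrix.one_apply,
        eq_comm]
  rw [hB, pow_succ, pow_succ, pow_one, Matrix.fromBlocks_multiply, Matrix.fromBlocks_multiply,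
    my_trace_fromBlocks]
  have hQQ : Qᵀ * Q = (Matrix.of (fun _ _ => (1 : ℝ)) : Matrix (Fin n2) (Fin n2) ℝ)
      ⊗ₖ (1 : Matrix (Fin n1) (Fin n1) ℝ) := by
    ext ⟨j, k⟩ ⟨j', k'⟩
    simp [Matrix.mul_apply, hQ, Matrix.one_apply, ite_and, Finset.sum_ite_eq, eq_comm]
  simp only [Matrix.add_mul, Matrix.mul_add, Matrix.trace_add,
    Matrix.fromBlocks_multiply, Matrix.fromRows_mul, Matrix.mul_fromCols,
    Matrix.fromRows_mul_fromCols, Matrix.fromCols_mul_fromRows,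
    Matrix.fromCols_mul_fromBlocks, Matrix.fromBlocks_mul_fromRows,
    Matrix.mul_zero, Matrix.zero_mul, zero_add, add_zero,
    my_trace_fromBlocks, Matrix.trace_zero]
  have t1 : (Matrix.fromCols (Matrix.fromRows (0 : Matrix (Fin n1) (Fin n1) ℝ)
      (Q * Qᵀ * P)) 0).trace = 0 := by
    simp [Matrix.trace, Matrix.diag, Fintype.sum_sum_type, Matrix.fromCols_apply_inl,
      Matrix.fromCols_apply_inr, Matrix.fromRows_apply_inl, Matrix.fromRows_apply_inr]
  have t2 : (Matrix.fromCols 0 (Matrix.fromRows (P * Q * Qᵀ)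
      (0 : Matrix (Fin n1) (Fin n1) ℝ))).trace = 0 := by
    simp [Matrix.trace, Matrix.diag, Fintype.sum_sum_type, Matrix.fromCols_apply_inl,
      Matrix.fromCols_apply_inr, Matrix.fromRows_apply_inl, Matrix.fromRows_apply_inr]
  have t3 : (Matrix.fromCols (0 : Matrix (Fin n1 ⊕ Fin n1) (Fin n1) ℝ)
      (Matrix.fromRows 0 (Q * R * Qᵀ))).trace = (Q * R * Qᵀ).trace := by
    simp [Matrix.trace, Matrix.diag, Fintype.sum_sum_type, Matrix.fromCols_apply_inl,
      Matrix.fromCols_apply_inr, Matrix.fromRows_apply_inl, Matrix.fromRows_apply_inr]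
  rw [t1, t2, t3]
  have c1 : (Q * R * Qᵀ).trace = (Qᵀ * Q * R).trace := by
    rw [Matrix.trace_mul_comm (Q * R) Qᵀ, ← Matrix.mul_assoc]
  have c2 : (R * Qᵀ * Q).trace = (Qᵀ * Q * R).trace := by
    rw [Matrix.mul_assoc, Matrix.trace_mul_comm R (Qᵀ * Q)]
  have key : (Qᵀ * Q * R).trace = (n1 : ℝ) * ∑ i, ∑ j, |A2 i j| := by
    rw [hQQ, hR, ← Matrix.mul_kronecker_mul, Matrix.trace_kronecker]
    simp only [Matrix.one_mul, Matrix.trace_one]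
    rw [Matrix.trace]
    simp only [Matrix.diag_apply, Matrix.mul_apply, Matrix.of_apply, one_mul, hA2',
      Matrix.map_apply, Fintype.card_fin]
    rw [Finset.sum_comm]
    ring
  have key2 : (R * R * R).trace = (n1 : ℝ) * ((A2') ^ 3).trace := by
    rw [hR, ← Matrix.mul_kronecker_mul, ← Matrix.mul_kronecker_mul, Matrix.trace_kronecker]
    simp only [Matrix.one_mul, Matrix.trace_one, Fintype.card_fin]
    rw [pow_succ, pow_succ, pow_one]
    ring
  rw [c1, c2, key, key2]
  ring
end

section
/- Let Γ1 (on n1 ≥ 1 vertices) and Γ2 be balanced signed graphs with markings μ1 and μ2 (Φ2 = diag(μ2)). Then Γ1⊛Γ2 is unbalanced if and only if A2 ≠ Φ2·|A2|·Φ2, i.e., if and only if Γ2 contains a positive edge joining two oppositely marked vertices, or a negative edge joining two positively marked vertices, or a negative edge joining two negatively marked vertices. -/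
open Matrix Kronecker BigOperators

/-- A signed graph with sign matrix `M` is balanced if some `±1` diagonal switching turns
`M` into the entrywise absolute value `|M|`. -/
def IsBalanced {V : Type} [Fintype V] [DecidableEq V] (M : Matrix V V ℝ) : Prop :=
  ∃ ε : V → ℝ, (∀ v, ε v = 1 ∨ ε v = -1) ∧
    Matrix.diagonal ε * M * Matrix.diagonal ε = M.map abs

private lemma corona_aux (a bj bk m uj uk x : ℝ)
    (ha : a = 1 ∨ a = -1) (hbj : bj = 1 ∨ bj = -1) (hbk : bk = 1 ∨ bk = -1)
    (hm : m = 1 ∨ m = -1) (huj : uj = 1 ∨ uj = -1) (huk : uk = 1 ∨ uk = -1)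
    (hx : x = 1 ∨ x = 0 ∨ x = -1)
    (e1 : a * (uj * m) * bj = |uj * m|)
    (e2 : a * (uk * m) * bk = |uk * m|)
    (e3 : bj * x * bk = |x|) : x = uj * |x| * uk := by
  rcases ha with h | h <;> subst h <;>
  rcases hbj with h | h <;> subst h <;>
  rcases hbk with h | h <;> subst h <;>
  rcases hm with h | h <;> subst h <;>
  rcases huj with h | h <;> subst h <;>
  rcases huk with h | h <;> subst h <;>
  rcases hx with h | h | h <;> rw [h] at e3 ⊢ <;>
  (revert e1 e2 e3; norm_num)

/-- If `Γ₁` (on `n₁ ≥ 1` vertices) and `Γ₂` are balanced, then `Γ₁⊛Γ₂` is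
unbalanced if and only if `A₂ ≠ Φ₂·|A₂|·Φ₂`, i.e. iff `Γ₂` contains a positive edge joining
oppositely marked vertices, or a negative edge joining two positively marked vertices, or a
negative edge joining two negatively marked vertices. -/
theorem corona_unbalanced_iff (n1 n2 : ℕ) (hn1 : 1 ≤ n1)
    (A1 : Matrix (Fin n1) (Fin n1) ℝ) (hA1sym : A1.IsSymm) (hA1diag : ∀ i, A1 i i = 0)
    (hA1ent : ∀ i j, A1 i j = 1 ∨ A1 i j = 0 ∨ A1 i j = -1)
    (μ1 : Fin n1 → ℝ) (hμ1 : ∀ i, μ1 i = 1 ∨ μ1 i = -1)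
    (A2 : Matrix (Fin n2) (Fin n2) ℝ) (hA2sym : A2.IsSymm) (hA2diag : ∀ i, A2 i i = 0)
    (hA2ent : ∀ i j, A2 i j = 1 ∨ A2 i j = 0 ∨ A2 i j = -1)
    (μ2 : Fin n2 → ℝ) (hμ2 : ∀ i, μ2 i = 1 ∨ μ2 i = -1)
    (hbal1 : IsBalanced A1) (hbal2 : IsBalanced A2) :
    ¬ IsBalanced
        (coronaStar (Matrix.diagonal μ1 * A1.map abs * Matrix.diagonal μ1) A2 μ1 μ2)
      ↔ A2 ≠ Matrix.diagonal μ2 * A2.map abs * Matrix.diagonal μ2 := by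
  rw [Ne, not_iff_not]
  constructor
  · rintro ⟨ε, hε, hmat⟩
    have key : ∀ a b, ε a * coronaStar (Matrix.diagonal μ1 * A1.map abs * Matrix.diagonal μ1)
        A2 μ1 μ2 a b * ε b =
        |coronaStar (Matrix.diagonal μ1 * A1.map abs * Matrix.diagonal μ1) A2 μ1 μ2 a b| := by
      intro a b
      have := congrFun (congrFun hmat a) b
      simpa [Matrix.mul_diagonal, Matrix.diagonal_mul, Matrix.map_apply] using this
    set i0 : Fin n1 := ⟨0, hn1⟩ with hi0
    ext j k
    have h1j := key (Sum.inl (Sum.inr i0)) (Sum.inr (j, i0))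
    have h1k := key (Sum.inl (Sum.inr i0)) (Sum.inr (k, i0))
    have h2 := key (Sum.inr (j, i0)) (Sum.inr (k, i0))
    simp only [coronaStar, muBlock, Matrix.fromBlocks_apply₁₂, Matrix.fromBlocks_apply₂₂,
      Matrix.fromRows_apply_inr, Matrix.of_apply, Matrix.diagonal_apply_eq,
      Matrix.kroneckerMap_apply, Matrix.one_apply_eq, mul_one] at h1j h1k h2
    simp only [Matrix.mul_diagonal, Matrix.diagonal_mul, Matrix.map_apply]
    exact corona_aux (ε (Sum.inl (Sum.inr i0))) (ε (Sum.inr (j, i0))) (ε (Sum.inr (k, i0)))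
      (μ1 i0) (μ2 j) (μ2 k) (A2 j k) (hε _) (hε _) (hε _) (hμ1 i0) (hμ2 j) (hμ2 k)
      (hA2ent j k) h1j h1k h2
  · intro h
    refine ⟨fun a => match a with
      | Sum.inl (Sum.inl i) => μ1 i
      | Sum.inl (Sum.inr i) => μ1 i
      | Sum.inr p => μ2 p.1, fun v => ?_, ?_⟩
    · rcases v with (i | i) | p
      · exact hμ1 i
      · exact hμ1 i
      · exact hμ2 p.1
    · ext a b
      have hA2' : ∀ j k, A2 j k = μ2 j * |A2 j k| * μ2 k := by
        intro j k
        have := congrFun (congrFun h j) k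
        simpa [Matrix.mul_diagonal, Matrix.diagonal_mul, Matrix.map_apply] using this
      simp only [Matrix.mul_diagonal, Matrix.diagonal_mul, Matrix.map_apply]
      rcases a with (i | i) | ⟨p1, p2⟩ <;> rcases b with (j | j) | ⟨q1, q2⟩ <;>
        simp only [coronaStar, muBlock, Matrix.fromBlocks_apply₁₁, Matrix.fromBlocks_apply₁₂,
          Matrix.fromBlocks_apply₂₁, Matrix.fromBlocks_apply₂₂, Matrix.fromRows_apply_inl,
          Matrix.fromRows_apply_inr, Matrix.fromCols_apply_inl, Matrix.fromCols_apply_inr,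
          Matrix.transpose_apply, Matrix.of_apply, Matrix.kroneckerMap_apply,
          Matrix.zero_apply, Matrix.mul_diagonal, Matrix.diagonal_mul, Matrix.map_apply,
          mul_zero, zero_mul, abs_zero]
      · rcases hμ1 i with h1 | h1 <;> rcases hμ1 j with h2 | h2 <;>
          simp [h1, h2, abs_abs, abs_neg]
      · rcases hμ1 i with h1 | h1 <;> rcases hμ1 j with h2 | h2 <;>
          simp [h1, h2, abs_abs, abs_neg]
      · rcases eq_or_ne i q2 with he | he
        · subst he
          rcases hμ1 i with h1 | h1 <;> rcases hμ2 q1 with h2 | h2 <;>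
            simp [h1, h2, Matrix.diagonal_apply_eq]
        · simp [Matrix.diagonal_apply_ne _ he]
      · rcases eq_or_ne j p2 with he | he
        · subst he
          rcases hμ1 j with h1 | h1 <;> rcases hμ2 p1 with h2 | h2 <;>
            simp [h1, h2, Matrix.diagonal_apply_eq]
        · simp [Matrix.diagonal_apply_ne _ he]
      · rcases eq_or_ne p2 q2 with he | he
        · subst he
          simp only [Matrix.one_apply_eq, mul_one]
          rw [hA2' p1 q1]
          rcases hμ2 p1 with h1 | h1 <;> rcases hμ2 q1 with h2 | h2 <;>
            simp [h1, h2, abs_abs, abs_neg] <;> ring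
        · simp [Matrix.one_apply_ne he]
end

section
/- Let Γ1 be a signed graph on n1 vertices with adjacency matrix A1 and marking μ1, and Γ2 a signed graph on n2 vertices with adjacency matrix A2 and marking μ2. Then for every real x such that x·I_{n2} − A2 is invertible, det(x·I − A(Γ1⊛Γ2)) = det(x·I_{n2} − A2)^{n1} · det( (x² − x·χ_{A2}(x))·I_{n1} − A_{1μ}² ). Equivalently, the adjacency characteristic polynomial of Γ1⊛Γ2 equals ∏_{i=1}^{n2}(x − λ_{2i})^{n1} · ∏_{i=1}^{n1}(x² − x·χ_{A2}(x) − (λ'_{1i})²), where λ_{2i} are the eigenvalues of A2 and λ'_{1i} are the eigenvalues of A_{1μ}. -/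
open Matrix Kronecker BigOperators

/-- The signed `M`-coronal `χ_M(x) = μᵀ·(x·I − M)⁻¹·μ`. -/
noncomputable def coronal {V : Type} [Fintype V] [DecidableEq V]
    (M : Matrix V V ℝ) (μ : V → ℝ) (x : ℝ) : ℝ :=
  μ ⬝ᵥ ((x • (1 : Matrix V V ℝ) - M)⁻¹ *ᵥ μ)

open Polynomial

lemma det_aux_ne {n : ℕ} (B : Matrix (Fin n) (Fin n) ℝ) (a e : ℝ) (ha : a ≠ 0) :
    (Matrix.fromBlocks (a • 1) (-B) (-B) (e • (1 : Matrix (Fin n) (Fin n) ℝ))).det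
      = ((a * e) • (1 : Matrix (Fin n) (Fin n) ℝ) - B * B).det := by
  haveI : Invertible (a • (1 : Matrix (Fin n) (Fin n) ℝ)) :=
    Matrix.invertibleOfIsUnitDet _ (by
      rw [Matrix.det_smul, Matrix.det_one, Fintype.card_fin, mul_one]
      exact (isUnit_iff_ne_zero.2 ha).pow n)
  have hinv : ⅟(a • (1 : Matrix (Fin n) (Fin n) ℝ)) = a⁻¹ • 1 := by
    apply invOf_eq_right_inv
    rw [Matrix.smul_mul, Matrix.mul_smul, smul_smul, mul_inv_cancel₀ ha, one_smul, Matrix.one_mul]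
  rw [Matrix.det_fromBlocks₁₁, hinv]
  have h1 : (-B) * (a⁻¹ • (1 : Matrix (Fin n) (Fin n) ℝ)) * (-B) = a⁻¹ • (B * B) := by
    rw [Matrix.mul_smul, Matrix.mul_one, Matrix.smul_mul, neg_mul_neg]
  rw [h1]
  have h2 : (a * e) • (1 : Matrix (Fin n) (Fin n) ℝ) - B * B
      = a • (e • (1 : Matrix (Fin n) (Fin n) ℝ) - a⁻¹ • (B * B)) := by
    rw [smul_sub, smul_smul, smul_smul, mul_inv_cancel₀ ha, one_smul]
  rw [h2, Matrix.det_smul, Matrix.det_smul, Fintype.card_fin, Matrix.det_one, mul_one]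

lemma eval_det_lhs {n : ℕ} (B : Matrix (Fin n) (Fin n) ℝ) (e t : ℝ) :
    eval t (Matrix.fromBlocks ((X : ℝ[X]) • 1) (-(B.map C)) (-(B.map C))
        ((C e) • (1 : Matrix (Fin n) (Fin n) ℝ[X]))).det
      = (Matrix.fromBlocks (t • 1) (-B) (-B) (e • (1 : Matrix (Fin n) (Fin n) ℝ))).det := by
  rw [show (eval t : ℝ[X] → ℝ) = ⇑(evalRingHom t) from rfl, RingHom.map_det]
  congr 1
  ext (i | i) (j | j) <;>
    simp [Matrix.map_apply, Matrix.one_apply, apply_ite (eval t)]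

lemma eval_det_rhs {n : ℕ} (B : Matrix (Fin n) (Fin n) ℝ) (e t : ℝ) :
    eval t ((X * C e) • (1 : Matrix (Fin n) (Fin n) ℝ[X]) - (B.map C) * (B.map C)).det
      = ((t * e) • (1 : Matrix (Fin n) (Fin n) ℝ) - B * B).det := by
  rw [show (eval t : ℝ[X] → ℝ) = ⇑(evalRingHom t) from rfl, RingHom.map_det]
  congr 1
  ext i j
  simp [Matrix.map_apply, Matrix.one_apply, Matrix.mul_apply, apply_ite (eval t),
    eval_finset_sum, mul_comm e t]

lemma det_aux {n : ℕ} (B : Matrix (Fin n) (Fin n) ℝ) (a e : ℝ) :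
    (Matrix.fromBlocks (a • 1) (-B) (-B) (e • (1 : Matrix (Fin n) (Fin n) ℝ))).det
      = ((a * e) • (1 : Matrix (Fin n) (Fin n) ℝ) - B * B).det := by
  have key : (Matrix.fromBlocks ((X : ℝ[X]) • 1) (-(B.map C)) (-(B.map C))
        ((C e) • (1 : Matrix (Fin n) (Fin n) ℝ[X]))).det
      = ((X * C e) • (1 : Matrix (Fin n) (Fin n) ℝ[X]) - (B.map C) * (B.map C)).det := by
    apply Polynomial.eq_of_infinite_eval_eq
    refine Set.Infinite.mono ?_ ((Set.finite_singleton (0:ℝ)).infinite_compl)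
    intro t ht
    have ht' : t ≠ 0 := ht
    show eval t _ = eval t _
    rw [eval_det_lhs, eval_det_rhs, det_aux_ne B t e ht']
  have := congrArg (eval a) key
  rwa [eval_det_lhs, eval_det_rhs] at this

open Kronecker in
lemma muBlock_sandwich {n1 n2 : ℕ} (μ1 : Fin n1 → ℝ) (hμ1 : ∀ i, μ1 i = 1 ∨ μ1 i = -1)
    (μ2 : Fin n2 → ℝ) (M : Matrix (Fin n2) (Fin n2) ℝ) :
    muBlock μ1 μ2 * (M ⊗ₖ (1 : Matrix (Fin n1) (Fin n1) ℝ)) * (muBlock μ1 μ2)ᵀ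
      = (μ2 ⬝ᵥ (M *ᵥ μ2)) • (1 : Matrix (Fin n1) (Fin n1) ℝ) := by
  ext i j
  simp only [Matrix.mul_apply, muBlock, Matrix.of_apply, Matrix.transpose_apply,
    Matrix.kroneckerMap_apply, Matrix.one_apply, Matrix.diagonal_apply, Matrix.smul_apply,
    Fintype.sum_prod_type, smul_eq_mul, Matrix.mulVec, dotProduct]
  rw [Finset.sum_comm]
  simp only [mul_ite, ite_mul, zero_mul, mul_zero, mul_one, Finset.sum_ite_eq,
    Finset.sum_ite_eq', Finset.mem_univ, if_true]
  by_cases hij : i = j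
  · subst hij
    simp only [eq_self_iff_true, if_true]
    have h1 : μ1 i * μ1 i = 1 := by rcases hμ1 i with h | h <;> rw [h] <;> norm_num
    have hy : ∀ y : Fin n2,
        (∑ x : Fin n1, if i = x then
          (∑ r : Fin n2, if i = x then μ2 r * μ1 i * M r y else 0) * (μ2 y * μ1 i) else 0)
          = (∑ r : Fin n2, μ2 r * μ1 i * M r y) * (μ2 y * μ1 i) := by
      intro y
      rw [Finset.sum_eq_single i]
      · simp
      · intro b _ hb
        simp [Ne.symm hb]
      · intro h
        exact absurd (Finset.mem_univ i) h
    rw [Finset.sum_comm, Finset.sum_congr rfl fun y _ => hy y]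
    simp only [Finset.sum_mul, Finset.mul_sum]
    rw [Finset.sum_comm]
    refine Finset.sum_congr rfl fun r _ => Finset.sum_congr rfl fun y _ => ?_
    calc (μ2 r * μ1 i * M r y) * (μ2 y * μ1 i)
        = (μ1 i * μ1 i) * (μ2 r * (M r y * μ2 y)) := by ring
      _ = μ2 r * (M r y * μ2 y) := by rw [h1, one_mul]
  · simp [hij, Ne.symm hij]

/-- For every real `x` such that `x·I_{n₂} − A₂` is invertible,
`det(x·I − A(Γ₁⊛Γ₂)) = det(x·I − A₂)^{n₁} · det((x² − x·χ_{A₂}(x))·I_{n₁} − A₁μ²)`. -/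
theorem corona_adjacency_charpoly (n1 n2 : ℕ)
    (A1 : Matrix (Fin n1) (Fin n1) ℝ) (hA1sym : A1.IsSymm) (hA1diag : ∀ i, A1 i i = 0)
    (hA1ent : ∀ i j, A1 i j = 1 ∨ A1 i j = 0 ∨ A1 i j = -1)
    (μ1 : Fin n1 → ℝ) (hμ1 : ∀ i, μ1 i = 1 ∨ μ1 i = -1)
    (A2 : Matrix (Fin n2) (Fin n2) ℝ) (hA2sym : A2.IsSymm) (hA2diag : ∀ i, A2 i i = 0)
    (hA2ent : ∀ i j, A2 i j = 1 ∨ A2 i j = 0 ∨ A2 i j = -1)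
    (μ2 : Fin n2 → ℝ) (hμ2 : ∀ i, μ2 i = 1 ∨ μ2 i = -1)
    (x : ℝ) (hx : IsUnit (x • (1 : Matrix (Fin n2) (Fin n2) ℝ) - A2).det) :
    (x • 1 -
        coronaStar (Matrix.diagonal μ1 * A1.map abs * Matrix.diagonal μ1) A2 μ1 μ2).det
      = (x • (1 : Matrix (Fin n2) (Fin n2) ℝ) - A2).det ^ n1 *
        ((x ^ 2 - x * coronal A2 μ2 x) • (1 : Matrix (Fin n1) (Fin n1) ℝ)
          - (Matrix.diagonal μ1 * A1.map abs * Matrix.diagonal μ1) ^ 2).det := by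
  set B : Matrix (Fin n1) (Fin n1) ℝ := Matrix.diagonal μ1 * A1.map abs * Matrix.diagonal μ1
    with hB
  set S : Matrix (Fin n2) (Fin n2) ℝ := x • 1 - A2 with hS
  set Cm : Matrix (Fin n1) (Fin n2 × Fin n1) ℝ := muBlock μ1 μ2 with hC
  -- Step 1: block shape of the characteristic matrix
  have hmat : x • (1 : Matrix ((Fin n1 ⊕ Fin n1) ⊕ Fin n2 × Fin n1)
        ((Fin n1 ⊕ Fin n1) ⊕ Fin n2 × Fin n1) ℝ) - coronaStar B A2 μ1 μ2
      = Matrix.fromBlocks (Matrix.fromBlocks (x • 1) (-B) (-B) (x • 1))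
          (Matrix.fromRows 0 (-Cm)) (Matrix.fromCols 0 (-Cmᵀ)) (S ⊗ₖ 1) := by
    ext i j
    rcases i with (i | i) | i <;> rcases j with (j | j) | j <;>
      simp [coronaStar, Matrix.one_apply, Prod.ext_iff, hS, hC, Matrix.sub_apply,
        Matrix.smul_apply] <;>
      split_ifs <;> simp_all <;> ring
  -- invertibility of the bottom-right block
  haveI : Invertible (S ⊗ₖ (1 : Matrix (Fin n1) (Fin n1) ℝ)) :=
    Matrix.invertibleOfIsUnitDet _ (by
      rw [Matrix.det_kronecker, Matrix.det_one, one_pow, mul_one, Fintype.card_fin]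
      exact hx.pow n1)
  have hinvOf : ⅟(S ⊗ₖ (1 : Matrix (Fin n1) (Fin n1) ℝ)) = S⁻¹ ⊗ₖ 1 := by
    rw [Matrix.invOf_eq_nonsing_inv, Matrix.inv_kronecker, inv_one]
  rw [hmat, Matrix.det_fromBlocks₂₂, hinvOf]
  have hdetS : (S ⊗ₖ (1 : Matrix (Fin n1) (Fin n1) ℝ)).det = S.det ^ n1 := by
    rw [Matrix.det_kronecker, Matrix.det_one, one_pow, mul_one, Fintype.card_fin]
  rw [hdetS]
  congr 1
  -- Step 2: the Schur complement
  have hSchur : Matrix.fromRows (0 : Matrix (Fin n1) (Fin n2 × Fin n1) ℝ) (-Cm) *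
        (S⁻¹ ⊗ₖ (1 : Matrix (Fin n1) (Fin n1) ℝ)) * Matrix.fromCols (0 : Matrix (Fin n2 × Fin n1) (Fin n1) ℝ) (-Cmᵀ)
      = Matrix.fromBlocks 0 0 0 ((coronal A2 μ2 x) • (1 : Matrix (Fin n1) (Fin n1) ℝ)) := by
    rw [Matrix.fromRows_mul, Matrix.fromRows_mul_fromCols]
    have hpos : Cm * (S⁻¹ ⊗ₖ (1 : Matrix (Fin n1) (Fin n1) ℝ)) * Cmᵀ = coronal A2 μ2 x • (1 : Matrix (Fin n1) (Fin n1) ℝ) := by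
      have hcor : coronal A2 μ2 x = μ2 ⬝ᵥ (S⁻¹ *ᵥ μ2) := by rw [coronal, hS]
      rw [hcor]
      exact muBlock_sandwich μ1 hμ1 μ2 S⁻¹
    simp [Matrix.neg_mul, Matrix.mul_neg, neg_neg, hpos]
  rw [hSchur]
  have hsub : Matrix.fromBlocks (x • 1) (-B) (-B) (x • (1 : Matrix (Fin n1) (Fin n1) ℝ)) -
        Matrix.fromBlocks 0 0 0 ((coronal A2 μ2 x) • 1)
      = Matrix.fromBlocks (x • 1) (-B) (-B) ((x - coronal A2 μ2 x) • 1) := by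
    ext (i | i) (j | j) <;> simp [sub_smul]
  rw [hsub, det_aux]
  congr 2
  · ring
  · rw [sq]
end

section
/- Let Γ1 be a balanced signed graph on n1 vertices with adjacency matrix A1 and marking μ1. Then A1 and A_{1μ} = Φ1·|A1|·Φ1 are cospectral (they have the same characteristic polynomial), and consequently for any signed graph Γ2 on n2 vertices with adjacency matrix A2 and marking μ2, and every real x with x·I_{n2} − A2 invertible, det(x·I − A(Γ1⊛Γ2)) = det(x·I_{n2} − A2)^{n1} · det( (x² − x·χ_{A2}(x))·I_{n1} − A1² ). -/
open Matrix Kronecker BigOperators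

section Aux

open Polynomial

lemma det_conj_invol {R : Type*} [CommRing R] {n : ℕ} {D : Matrix (Fin n) (Fin n) R}
    (hD : D * D = 1) (M : Matrix (Fin n) (Fin n) R) : (D * M * D).det = M.det := by
  have h : D.det * D.det = 1 := by rw [← det_mul, hD, det_one]
  calc (D * M * D).det = (D.det * D.det) * M.det := by rw [det_mul, det_mul]; ring
    _ = M.det := by rw [h, one_mul]

lemma charpoly_diag_conj {R : Type*} [CommRing R] {n : ℕ} (w : Fin n → R)
    (hw : ∀ i, w i * w i = 1) (A : Matrix (Fin n) (Fin n) R) :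
    (Matrix.diagonal w * A * Matrix.diagonal w).charpoly = A.charpoly := by
  set D := Matrix.diagonal w with hDdef
  have hD : D * D = 1 := by
    rw [hDdef, diagonal_mul_diagonal]
    have : (fun i => w i * w i) = fun _ => (1 : R) := funext hw
    rw [this, diagonal_one]
  have hDC : D.map (C : R →+* R[X]) * D.map C = 1 := by
    rw [← Matrix.map_mul, hD, Matrix.map_one _ (map_zero _) (map_one _)]
  have hch : ∀ M : Matrix (Fin n) (Fin n) R,
      charmatrix M = Matrix.diagonal (fun _ => (X : R[X])) - M.map C := by
    intro M; ext i j; rw [charmatrix_apply]; simp [Matrix.sub_apply]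
  have hkey : charmatrix (D * A * D) = D.map C * charmatrix A * D.map C := by
    rw [hch, hch]
    rw [Matrix.mul_sub, Matrix.sub_mul]
    have h1 : D.map (C : R →+* R[X]) * Matrix.diagonal (fun _ => (X : R[X])) * D.map C
        = Matrix.diagonal (fun _ => (X : R[X])) := by
      rw [hDdef, Matrix.diagonal_map (map_zero _), diagonal_mul_diagonal,
        diagonal_mul_diagonal]
      have he : (fun i => (C (w i) : R[X]) * X * C (w i)) = fun _ => (X : R[X]) := by
        funext i
        have hc : (C (w i) : R[X]) * C (w i) = 1 := by
          rw [← _root_.map_mul, hw i, _root_.map_one]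
        calc (C (w i) : R[X]) * X * C (w i) = X * (C (w i) * C (w i)) := by ring
          _ = X := by rw [hc, mul_one]
      rw [he]
    rw [h1, ← Matrix.map_mul, ← Matrix.map_mul]
  have hdet : (D.map (C : R →+* R[X])).det * (D.map C).det = 1 := by
    rw [← det_mul, hDC, det_one]
  rw [Matrix.charpoly, Matrix.charpoly, hkey, det_mul, det_mul]
  calc (D.map (C : R →+* R[X])).det * (charmatrix A).det * (D.map C).det
      = ((D.map (C : R →+* R[X])).det * (D.map C).det) * (charmatrix A).det := by ring
    _ = (charmatrix A).det := by rw [hdet, one_mul]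

lemma det_scalar_blocks {n : ℕ} (N : Matrix (Fin n) (Fin n) ℝ) (a d : ℝ) :
    (Matrix.fromBlocks (a • (1 : Matrix (Fin n) (Fin n) ℝ)) (-N) (-N)
        (d • (1 : Matrix (Fin n) (Fin n) ℝ))).det
      = ((a * d) • (1 : Matrix (Fin n) (Fin n) ℝ) - N * N).det := by
  have main : ∀ d : ℝ, d ≠ 0 →
      (Matrix.fromBlocks (a • (1 : Matrix (Fin n) (Fin n) ℝ)) (-N) (-N)
        (d • (1 : Matrix (Fin n) (Fin n) ℝ))).det
      = ((a * d) • (1 : Matrix (Fin n) (Fin n) ℝ) - N * N).det := by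
    intro d hd
    have hinv : (d • (1 : Matrix (Fin n) (Fin n) ℝ)) * (d⁻¹ • 1) = 1 := by
      rw [smul_mul_smul_comm, mul_one, mul_inv_cancel₀ hd, one_smul]
    have hinv' : (d⁻¹ • (1 : Matrix (Fin n) (Fin n) ℝ)) * (d • 1) = 1 := by
      rw [smul_mul_smul_comm, mul_one, inv_mul_cancel₀ hd, one_smul]
    haveI : Invertible (d • (1 : Matrix (Fin n) (Fin n) ℝ)) := ⟨d⁻¹ • 1, hinv', hinv⟩
    rw [Matrix.det_fromBlocks₂₂]
    have hio : ⅟(d • (1 : Matrix (Fin n) (Fin n) ℝ)) = d⁻¹ • 1 := invOf_eq_right_inv hinv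
    rw [hio]
    have hsc : (-N) * (d⁻¹ • (1 : Matrix (Fin n) (Fin n) ℝ)) * (-N) = d⁻¹ • (N * N) := by
      rw [Matrix.mul_smul, Matrix.mul_one, Matrix.smul_mul, neg_mul_neg]
    rw [hsc]
    have hfac : (a * d) • (1 : Matrix (Fin n) (Fin n) ℝ) - N * N
        = d • (a • (1 : Matrix (Fin n) (Fin n) ℝ) - d⁻¹ • (N * N)) := by
      rw [smul_sub, smul_smul, smul_smul, mul_inv_cancel₀ hd, one_smul, mul_comm]
    rw [hfac, det_smul, det_smul, Fintype.card_fin, det_one, mul_one]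
  rcases eq_or_ne d 0 with rfl | hd
  · have hf : Continuous fun d : ℝ =>
        (Matrix.fromBlocks (a • (1 : Matrix (Fin n) (Fin n) ℝ)) (-N) (-N)
          (d • (1 : Matrix (Fin n) (Fin n) ℝ))).det := by
      apply Continuous.matrix_det
      exact Continuous.matrix_fromBlocks continuous_const continuous_const continuous_const
        (continuous_id.smul continuous_const)
    have hg : Continuous fun d : ℝ =>
        ((a * d) • (1 : Matrix (Fin n) (Fin n) ℝ) - N * N).det := by
      apply Continuous.matrix_det
      exact ((continuous_const.mul continuous_id).smul continuous_const).sub continuous_const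
    have heq := Continuous.ext_on (dense_compl_singleton (0 : ℝ)) hf hg
      (fun d hd => main d (by simpa using hd))
    exact congrFun heq 0
  · exact main d hd

lemma muBlock_conj {n1 n2 : ℕ} (μ1 : Fin n1 → ℝ) (μ2 : Fin n2 → ℝ)
    (h1 : ∀ i, μ1 i * μ1 i = 1) (M : Matrix (Fin n2) (Fin n2) ℝ) :
    muBlock μ1 μ2 * (M ⊗ₖ (1 : Matrix (Fin n1) (Fin n1) ℝ)) * (muBlock μ1 μ2)ᵀ
      = (μ2 ⬝ᵥ M *ᵥ μ2) • (1 : Matrix (Fin n1) (Fin n1) ℝ) := by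
  have h2 : ∀ i (q : Fin n2 × Fin n1),
      (muBlock μ1 μ2 * (M ⊗ₖ (1 : Matrix (Fin n1) (Fin n1) ℝ))) i q
        = (∑ j, μ2 j * M j q.1) * Matrix.diagonal μ1 i q.2 := by
    intro i q
    rw [Matrix.mul_apply, Fintype.sum_prod_type]
    simp only [muBlock, Matrix.of_apply, Matrix.kroneckerMap_apply, Matrix.diagonal_apply,
      Matrix.one_apply, Finset.sum_mul, mul_ite, ite_mul, zero_mul, mul_zero, mul_one,
      Finset.sum_ite_eq, Finset.sum_ite_eq', Finset.mem_univ, if_true]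
    by_cases h : i = q.2 <;> simp [h, Finset.sum_mul] <;> ring_nf
    · apply Finset.sum_congr rfl; intro j _; ring
  ext i i'
  rw [Matrix.mul_apply, Fintype.sum_prod_type]
  simp only [h2, Matrix.transpose_apply]
  simp only [muBlock, Matrix.of_apply, Matrix.diagonal_apply, Matrix.smul_apply,
    Matrix.one_apply, smul_eq_mul, mul_ite, ite_mul, zero_mul, mul_zero,
    Finset.sum_ite_eq, Finset.sum_ite_eq', Finset.mem_univ, if_true]
  by_cases h : i = i'
  · subst h
    simp only [if_true, mul_one]
    have key : ∀ x, (∑ x1, μ2 x1 * M x1 x) * μ1 i * (μ2 x * μ1 i)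
        = ∑ x1, μ2 x1 * (M x1 x * μ2 x) := by
      intro x
      calc (∑ x1, μ2 x1 * M x1 x) * μ1 i * (μ2 x * μ1 i)
          = ((∑ x1, μ2 x1 * M x1 x) * μ2 x) * (μ1 i * μ1 i) := by ring
        _ = (∑ x1, μ2 x1 * M x1 x) * μ2 x := by rw [h1 i, mul_one]
        _ = ∑ x1, μ2 x1 * (M x1 x * μ2 x) := by
            rw [Finset.sum_mul]; exact Finset.sum_congr rfl fun _ _ => by ring
    rw [Finset.sum_congr rfl fun x _ => key x, Finset.sum_comm]
    simp [dotProduct, Matrix.mulVec, Finset.mul_sum]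
  · simp [h]

lemma corona_split {n1 n2 : ℕ} (N : Matrix (Fin n1) (Fin n1) ℝ)
    (A2 : Matrix (Fin n2) (Fin n2) ℝ) (μ1 : Fin n1 → ℝ) (μ2 : Fin n2 → ℝ) (x : ℝ) :
    x • (1 : Matrix ((Fin n1 ⊕ Fin n1) ⊕ Fin n2 × Fin n1)
        ((Fin n1 ⊕ Fin n1) ⊕ Fin n2 × Fin n1) ℝ) - coronaStar N A2 μ1 μ2
      = Matrix.fromBlocks
          (Matrix.fromBlocks (x • 1) (-N) (-N) (x • 1))
          (Matrix.fromRows (0 : Matrix (Fin n1) (Fin n2 × Fin n1) ℝ) (-(muBlock μ1 μ2)))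
          (Matrix.fromCols (0 : Matrix (Fin n2 × Fin n1) (Fin n1) ℝ) (-(muBlock μ1 μ2)ᵀ))
          ((x • 1 - A2) ⊗ₖ (1 : Matrix (Fin n1) (Fin n1) ℝ)) := by
  ext i j
  rcases i with (i | i) | ⟨p, q⟩ <;> rcases j with (j | j) | ⟨p', q'⟩ <;>
    simp [coronaStar, Matrix.sub_apply, Matrix.smul_apply, Matrix.one_apply,
      Matrix.kroneckerMap_apply, Prod.ext_iff, sub_mul, ite_and] <;>
    split_ifs <;> simp_all

end Aux

/-- If `Γ₁` is balanced then `A₁` and `A₁μ = Φ₁·|A₁|·Φ₁` are cospectral, and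
consequently for any signed graph `Γ₂` and every real `x` with `x·I − A₂` invertible,
`det(x·I − A(Γ₁⊛Γ₂)) = det(x·I − A₂)^{n₁} · det((x² − x·χ_{A₂}(x))·I_{n₁} − A₁²)`. -/
theorem corona_adjacency_charpoly_balanced (n1 n2 : ℕ)
    (A1 : Matrix (Fin n1) (Fin n1) ℝ) (hA1sym : A1.IsSymm) (hA1diag : ∀ i, A1 i i = 0)
    (hA1ent : ∀ i j, A1 i j = 1 ∨ A1 i j = 0 ∨ A1 i j = -1)
    (μ1 : Fin n1 → ℝ) (hμ1 : ∀ i, μ1 i = 1 ∨ μ1 i = -1)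
    (hbal1 : ∃ ε : Fin n1 → ℝ, (∀ i, ε i = 1 ∨ ε i = -1) ∧
      Matrix.diagonal ε * A1 * Matrix.diagonal ε = A1.map abs) :
    A1.charpoly = (Matrix.diagonal μ1 * A1.map abs * Matrix.diagonal μ1).charpoly ∧
    ∀ (A2 : Matrix (Fin n2) (Fin n2) ℝ), A2.IsSymm → (∀ i, A2 i i = 0) →
      (∀ i j, A2 i j = 1 ∨ A2 i j = 0 ∨ A2 i j = -1) →
      ∀ (μ2 : Fin n2 → ℝ), (∀ i, μ2 i = 1 ∨ μ2 i = -1) →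
      ∀ x : ℝ, IsUnit (x • (1 : Matrix (Fin n2) (Fin n2) ℝ) - A2).det →
      (x • 1 -
          coronaStar (Matrix.diagonal μ1 * A1.map abs * Matrix.diagonal μ1) A2 μ1 μ2).det
        = (x • (1 : Matrix (Fin n2) (Fin n2) ℝ) - A2).det ^ n1 *
          ((x ^ 2 - x * coronal A2 μ2 x) • (1 : Matrix (Fin n1) (Fin n1) ℝ)
            - A1 ^ 2).det := by
  obtain ⟨ε, hε, hbal⟩ := hbal1
  have hw : ∀ i, (μ1 i * ε i) * (μ1 i * ε i) = 1 := by
    intro i; rcases hμ1 i with h | h <;> rcases hε i with h' | h' <;> rw [h, h'] <;> norm_num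
  set D := Matrix.diagonal (fun i => μ1 i * ε i) with hDdef
  have hDD : D * D = 1 := by
    rw [hDdef, diagonal_mul_diagonal]
    rw [show (fun i => (μ1 i * ε i) * (μ1 i * ε i)) = fun _ => (1 : ℝ) from funext hw,
      diagonal_one]
  have hN : Matrix.diagonal μ1 * A1.map abs * Matrix.diagonal μ1 = D * A1 * D := by
    rw [← hbal, hDdef]
    calc Matrix.diagonal μ1 * (Matrix.diagonal ε * A1 * Matrix.diagonal ε) * Matrix.diagonal μ1
        = (Matrix.diagonal μ1 * Matrix.diagonal ε) * A1
            * (Matrix.diagonal ε * Matrix.diagonal μ1) := by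
          simp only [Matrix.mul_assoc]
      _ = _ := by
          rw [diagonal_mul_diagonal, diagonal_mul_diagonal,
            show (fun i => ε i * μ1 i) = fun i => μ1 i * ε i from funext fun i => mul_comm _ _]
  constructor
  · rw [hN]; exact (charpoly_diag_conj _ hw A1).symm
  · intro A2 _ _ _ μ2 hμ2 x hx
    have hμ1sq : ∀ i, μ1 i * μ1 i = 1 := by
      intro i; rcases hμ1 i with h | h <;> rw [h] <;> norm_num
    set S := x • (1 : Matrix (Fin n2) (Fin n2) ℝ) - A2 with hSdef
    have hdetK : (S ⊗ₖ (1 : Matrix (Fin n1) (Fin n1) ℝ)).det = S.det ^ n1 := by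
      rw [Matrix.det_kronecker, det_one, one_pow, mul_one, Fintype.card_fin]
    haveI : Invertible (S ⊗ₖ (1 : Matrix (Fin n1) (Fin n1) ℝ)) :=
      Matrix.invertibleOfIsUnitDet _ (by rw [hdetK]; exact hx.pow n1)
    rw [corona_split, Matrix.det_fromBlocks₂₂, hdetK]
    congr 1
    have hinvK : ⅟(S ⊗ₖ (1 : Matrix (Fin n1) (Fin n1) ℝ))
        = S⁻¹ ⊗ₖ (1 : Matrix (Fin n1) (Fin n1) ℝ) := by
      rw [invOf_eq_nonsing_inv, Matrix.inv_kronecker, inv_one]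
    rw [hinvK]
    have hprod : Matrix.fromRows (0 : Matrix (Fin n1) (Fin n2 × Fin n1) ℝ) (-(muBlock μ1 μ2))
          * (S⁻¹ ⊗ₖ (1 : Matrix (Fin n1) (Fin n1) ℝ))
          * Matrix.fromCols (0 : Matrix (Fin n2 × Fin n1) (Fin n1) ℝ) (-(muBlock μ1 μ2)ᵀ)
        = Matrix.fromBlocks 0 0 0 ((μ2 ⬝ᵥ S⁻¹ *ᵥ μ2) • 1) := by
      rw [Matrix.fromRows_mul, Matrix.fromRows_mul_fromCols]
      simp only [Matrix.zero_mul, Matrix.mul_zero, Matrix.neg_mul, Matrix.mul_neg, neg_neg]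
      rw [muBlock_conj μ1 μ2 hμ1sq, neg_zero]
    rw [hprod]
    have hsub : Matrix.fromBlocks (x • 1)
          (-(Matrix.diagonal μ1 * A1.map abs * Matrix.diagonal μ1))
          (-(Matrix.diagonal μ1 * A1.map abs * Matrix.diagonal μ1))
          (x • (1 : Matrix (Fin n1) (Fin n1) ℝ))
        - Matrix.fromBlocks 0 0 0 ((μ2 ⬝ᵥ S⁻¹ *ᵥ μ2) • 1)
        = Matrix.fromBlocks (x • 1)
          (-(Matrix.diagonal μ1 * A1.map abs * Matrix.diagonal μ1))
          (-(Matrix.diagonal μ1 * A1.map abs * Matrix.diagonal μ1))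
          ((x - μ2 ⬝ᵥ S⁻¹ *ᵥ μ2) • (1 : Matrix (Fin n1) (Fin n1) ℝ)) := by
      ext i j
      rcases i with i | i <;> rcases j with j | j <;>
        simp [Matrix.sub_apply, sub_smul]
    rw [hsub, det_scalar_blocks]
    have hc : coronal A2 μ2 x = μ2 ⬝ᵥ S⁻¹ *ᵥ μ2 := rfl
    have hNN : (Matrix.diagonal μ1 * A1.map abs * Matrix.diagonal μ1)
        * (Matrix.diagonal μ1 * A1.map abs * Matrix.diagonal μ1) = D * (A1 * A1) * D := by
      rw [hN]
      calc D * A1 * D * (D * A1 * D) = D * A1 * (D * D) * A1 * D := by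
            simp only [Matrix.mul_assoc]
        _ = D * (A1 * A1) * D := by rw [hDD, Matrix.mul_one]; simp only [Matrix.mul_assoc]
    have hfinal : (x * (x - μ2 ⬝ᵥ S⁻¹ *ᵥ μ2)) • (1 : Matrix (Fin n1) (Fin n1) ℝ)
          - (Matrix.diagonal μ1 * A1.map abs * Matrix.diagonal μ1)
            * (Matrix.diagonal μ1 * A1.map abs * Matrix.diagonal μ1)
        = D * ((x ^ 2 - x * coronal A2 μ2 x) • (1 : Matrix (Fin n1) (Fin n1) ℝ)
            - A1 * A1) * D := by
      rw [hNN, hc, Matrix.mul_sub, Matrix.sub_mul, Matrix.mul_smul, Matrix.mul_one,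
        Matrix.smul_mul, hDD,
        show x ^ 2 - x * (μ2 ⬝ᵥ S⁻¹ *ᵥ μ2) = x * (x - μ2 ⬝ᵥ S⁻¹ *ᵥ μ2) from by ring]
    rw [hfinal, det_conj_invol hDD, show A1 ^ 2 = A1 * A1 from sq A1]
end

section
/- Let Γ1 be a balanced signed graph on n1 vertices with adjacency matrix A1 and marking μ1, and let Γ2 be a signed star on n2+1 vertices (n2 ≥ 1) with edge signs σ_j ∈ {−1,1} and canonical marking μ2. Then det(x·I − A(Γ1⊛Γ2)) = x^{n1(n2−1)} · det( (x⁴ − (2n2+1)·x² − 2n2·μ2(v1)·x)·I_{n1} − (x² − n2)·A1² ); equivalently, the spectrum of Γ1⊛Γ2 consists of the eigenvalue 0 with multiplicity n1(n2−1) together with, for each eigenvalue λ of A1, the four roots of x⁴ − (2n2+1+λ²)·x² − 2n2·μ2(v1)·x + n2·λ² = 0. -/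
open Matrix Kronecker BigOperators

namespace CoronaStarAux

/-- Reindexing equivalence splitting off the center copies from the leaf copies. -/
def starEquiv (n1 n2 : ℕ) :
    ((Fin n1 ⊕ Fin n1) ⊕ Fin (n2+1) × Fin n1) ≃
      (((Fin n1 ⊕ Fin n1) ⊕ Fin n1) ⊕ Fin n2 × Fin n1) where
  toFun a := match a with
    | .inl v => .inl (.inl v)
    | .inr ji => Fin.cases (Sum.inl (Sum.inr ji.2)) (fun j => Sum.inr (j, ji.2)) ji.1
  invFun b := match b with
    | .inl (.inl v) => .inl v
    | .inl (.inr i) => .inr (0, i)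
    | .inr ji => .inr (ji.1.succ, ji.2)
  left_inv := by
    rintro (v | ⟨j, i⟩)
    · rfl
    · induction j using Fin.cases <;> simp
  right_inv := by
    rintro ((v | i) | ⟨j, i⟩) <;> simp

lemma muBlock_mul_transpose {n1 n2 : ℕ} (a b : Fin n1 → ℝ) (σ : Fin n2 → ℝ)
    (hσ : ∀ j, σ j * σ j = 1) :
    muBlock a σ * (muBlock b σ)ᵀ = (n2 : ℝ) • Matrix.diagonal (fun i => a i * b i) := by
  ext i i'
  simp only [Matrix.mul_apply, muBlock, Matrix.of_apply, Matrix.transpose_apply,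
    Fintype.sum_prod_type, Matrix.smul_apply, smul_eq_mul]
  calc ∑ j : Fin n2, ∑ k : Fin n1,
        σ j * Matrix.diagonal a i k * (σ j * Matrix.diagonal b i' k)
      = ∑ _j : Fin n2, ∑ k : Fin n1, Matrix.diagonal a i k * Matrix.diagonal b i' k := by
        refine Finset.sum_congr rfl fun j _ => Finset.sum_congr rfl fun k _ => ?_
        linear_combination (Matrix.diagonal a i k * Matrix.diagonal b i' k) * hσ j
    _ = (n2 : ℝ) * ∑ k, Matrix.diagonal a i k * Matrix.diagonal b i' k := by
        rw [Finset.sum_const, Finset.card_univ, Fintype.card_fin, nsmul_eq_mul]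
    _ = (n2 : ℝ) * Matrix.diagonal (fun i => a i * b i) i i' := by
        congr 1
        rcases eq_or_ne i i' with h | h
        · subst h; simp [Matrix.diagonal_apply]
        · rw [Matrix.diagonal_apply_ne _ h]
          refine Finset.sum_eq_zero fun k _ => ?_
          rcases eq_or_ne i k with hk | hk
          · subst hk; rw [Matrix.diagonal_apply_ne _ (Ne.symm h), mul_zero]
          · rw [Matrix.diagonal_apply_ne _ hk, zero_mul]

lemma fromBlocks_sub {l m n o α : Type*} [Sub α] (A A' : Matrix n l α) (B B' : Matrix n m α)
    (C C' : Matrix o l α) (D D' : Matrix o m α) :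
    Matrix.fromBlocks A B C D - Matrix.fromBlocks A' B' C' D' =
      Matrix.fromBlocks (A - A') (B - B') (C - C') (D - D') := by
  ext (i | i) (j | j) <;> rfl

lemma smul_fromRows {m₁ m₂ n : Type*} (a : ℝ) (X : Matrix m₁ n ℝ) (Y : Matrix m₂ n ℝ) :
    a • Matrix.fromRows X Y = Matrix.fromRows (a • X) (a • Y) := by
  ext (i | i) j <;> rfl

lemma smul_fromColumns {m n₁ n₂ : Type*} (a : ℝ) (X : Matrix m n₁ ℝ) (Y : Matrix m n₂ ℝ) :
    a • Matrix.fromCols X Y = Matrix.fromCols (a • X) (a • Y) := by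
  ext i (j | j) <;> rfl

lemma fromRows_sub {m₁ m₂ n : Type*} (X X' : Matrix m₁ n ℝ) (Y Y' : Matrix m₂ n ℝ) :
    Matrix.fromRows X Y - Matrix.fromRows X' Y' = Matrix.fromRows (X - X') (Y - Y') := by
  ext (i | i) j <;> rfl

lemma fromColumns_sub {m n₁ n₂ : Type*} (X X' : Matrix m n₁ ℝ) (Y Y' : Matrix m n₂ ℝ) :
    Matrix.fromCols X Y - Matrix.fromCols X' Y' = Matrix.fromCols (X - X') (Y - Y') := by
  ext i (j | j) <;> rfl

/-- An explicit invertibility witness for a nonzero scalar multiple of `1`. -/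
noncomputable def invertibleSmulOne {m : Type*} [Fintype m] [DecidableEq m] {a : ℝ} (ha : a ≠ 0) :
    Invertible (a • (1 : Matrix m m ℝ)) where
  invOf := a⁻¹ • 1
  invOf_mul_self := by
    rw [Matrix.smul_mul, Matrix.one_mul, smul_smul, inv_mul_cancel₀ ha, one_smul]
  mul_invOf_self := by
    rw [Matrix.smul_mul, Matrix.one_mul, smul_smul, mul_inv_cancel₀ ha, one_smul]

lemma matrixEq (n1 n2 : ℕ) (A1μ : Matrix (Fin n1) (Fin n1) ℝ)
    (μ1 : Fin n1 → ℝ) (σ : Fin n2 → ℝ)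
    (A2 : Matrix (Fin (n2 + 1)) (Fin (n2 + 1)) ℝ)
    (hA2c : A2 0 0 = 0)
    (hA2row : ∀ j : Fin n2, A2 0 j.succ = σ j)
    (hA2col : ∀ j : Fin n2, A2 j.succ 0 = σ j)
    (hA2leaf : ∀ j k : Fin n2, A2 j.succ k.succ = 0)
    (μ2 : Fin (n2 + 1) → ℝ)
    (hμ2leaf : ∀ j : Fin n2, μ2 j.succ = σ j)
    (x : ℝ) :
    x • (1 : Matrix ((Fin n1 ⊕ Fin n1) ⊕ Fin (n2+1) × Fin n1)
          ((Fin n1 ⊕ Fin n1) ⊕ Fin (n2+1) × Fin n1) ℝ) - coronaStar A1μ A2 μ1 μ2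
      = (Matrix.fromBlocks
          (Matrix.fromBlocks
            (Matrix.fromBlocks (x • 1) (-A1μ) (-A1μ) (x • 1))
            (Matrix.fromRows 0 ((-(μ2 0)) • Matrix.diagonal μ1))
            (Matrix.fromCols 0 ((-(μ2 0)) • Matrix.diagonal μ1))
            (x • 1))
          (Matrix.fromRows (Matrix.fromRows 0 (-(muBlock μ1 σ)))
            (-(muBlock (fun _ => (1:ℝ)) σ)))
          (Matrix.fromCols (Matrix.fromCols 0 (-(muBlock μ1 σ)ᵀ))
            (-(muBlock (fun _ => (1:ℝ)) σ)ᵀ))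
          (x • 1)).submatrix (starEquiv n1 n2) (starEquiv n1 n2) := by
  ext a b
  rcases a with (i | i) | ⟨j, i⟩ <;> rcases b with (i' | i') | ⟨j', i'⟩
  · simp [starEquiv, coronaStar, Matrix.one_apply]
  · simp [starEquiv, coronaStar, Matrix.one_apply]
  · induction j' using Fin.cases with
    | zero => simp [starEquiv, coronaStar, muBlock, Matrix.one_apply]
    | succ j' => simp [starEquiv, coronaStar, muBlock, Matrix.one_apply]
  · simp [starEquiv, coronaStar, Matrix.one_apply]
  · simp [starEquiv, coronaStar, Matrix.one_apply]
  · induction j' using Fin.cases with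
    | zero => simp [starEquiv, coronaStar, muBlock, Matrix.one_apply, Matrix.diagonal_apply]
    | succ j' => simp [starEquiv, coronaStar, muBlock, hμ2leaf, Matrix.one_apply,
        Matrix.diagonal_apply]
  · induction j using Fin.cases with
    | zero => simp [starEquiv, coronaStar, muBlock, Matrix.one_apply]
    | succ j => simp [starEquiv, coronaStar, muBlock, Matrix.one_apply]
  · induction j using Fin.cases with
    | zero =>
      simp [starEquiv, coronaStar, muBlock, Matrix.one_apply, Matrix.diagonal_apply]
      rcases eq_or_ne i i' with h | h
      · subst h; simp
      · simp [h, Ne.symm h]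
    | succ j => simp [starEquiv, coronaStar, muBlock, hμ2leaf, Matrix.one_apply,
        Matrix.diagonal_apply]
  · induction j using Fin.cases with
    | zero =>
      induction j' using Fin.cases with
      | zero => simp [starEquiv, coronaStar, hA2c, Matrix.one_apply, Prod.ext_iff]
      | succ j' => simp [starEquiv, coronaStar, muBlock, hA2row, Matrix.one_apply,
          Matrix.diagonal_apply, Fin.succ_ne_zero, (Fin.succ_ne_zero j').symm, Prod.ext_iff]
    | succ j =>
      induction j' using Fin.cases with
      | zero =>
        simp [starEquiv, coronaStar, muBlock, hA2col, Matrix.one_apply,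
          Matrix.diagonal_apply, Fin.succ_ne_zero, (Fin.succ_ne_zero j).symm, Prod.ext_iff]
        rcases eq_or_ne i i' with h | h
        · subst h; simp
        · simp [h, Ne.symm h]
      | succ j' => simp [starEquiv, coronaStar, hA2leaf, Matrix.one_apply, Prod.ext_iff,
          Fin.succ_inj]

/-- The main computation, valid away from the exceptional values of `x`. -/
lemma key (n1 n2 : ℕ) (hn2 : 1 ≤ n2)
    (A1 : Matrix (Fin n1) (Fin n1) ℝ)
    (μ1 : Fin n1 → ℝ) (hμ1 : ∀ i, μ1 i = 1 ∨ μ1 i = -1)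
    (hbal1 : ∃ ε : Fin n1 → ℝ, (∀ i, ε i = 1 ∨ ε i = -1) ∧
      Matrix.diagonal ε * A1 * Matrix.diagonal ε = A1.map abs)
    (σ : Fin n2 → ℝ) (hσ : ∀ j, σ j = 1 ∨ σ j = -1)
    (A2 : Matrix (Fin (n2 + 1)) (Fin (n2 + 1)) ℝ)
    (hA2c : A2 0 0 = 0)
    (hA2row : ∀ j : Fin n2, A2 0 j.succ = σ j)
    (hA2col : ∀ j : Fin n2, A2 j.succ 0 = σ j)
    (hA2leaf : ∀ j k : Fin n2, A2 j.succ k.succ = 0)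
    (μ2 : Fin (n2 + 1) → ℝ)
    (hμ2c : μ2 0 = ∏ j, σ j)
    (hμ2leaf : ∀ j : Fin n2, μ2 j.succ = σ j)
    (x : ℝ) (hx : x ≠ 0) (hv : x ^ 2 - (n2 : ℝ) ≠ 0) :
    (x • 1 -
        coronaStar (Matrix.diagonal μ1 * A1.map abs * Matrix.diagonal μ1) A2 μ1 μ2).det
      = x ^ (n1 * (n2 - 1)) *
        ((x ^ 4 - (2 * (n2 : ℝ) + 1) * x ^ 2 - 2 * (n2 : ℝ) * μ2 0 * x) •
            (1 : Matrix (Fin n1) (Fin n1) ℝ)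
          - (x ^ 2 - (n2 : ℝ)) • A1 ^ 2).det := by
  obtain ⟨ε, hε, hbal⟩ := hbal1
  have hμ1sq : ∀ i, μ1 i * μ1 i = 1 := fun i => by rcases hμ1 i with h | h <;> rw [h] <;> norm_num
  have hεsq : ∀ i, ε i * ε i = 1 := fun i => by rcases hε i with h | h <;> rw [h] <;> norm_num
  have hσsq : ∀ j, σ j * σ j = 1 := fun j => by rcases hσ j with h | h <;> rw [h] <;> norm_num
  have hp : μ2 0 = 1 ∨ μ2 0 = -1 := by
    rw [hμ2c]
    exact Finset.prod_induction σ (fun y => y = 1 ∨ y = -1)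
      (by rintro a b (ha | ha) (hb | hb) <;> rw [ha, hb] <;> norm_num) (Or.inl rfl)
      (fun j _ => hσ j)
  have hqne : x - (n2 : ℝ) * x⁻¹ ≠ 0 := by
    intro h
    apply hv
    have : (x - (n2 : ℝ) * x⁻¹) * x = x ^ 2 - (n2 : ℝ) := by field_simp
    rw [← this, h, zero_mul]
  have hΦΦ : Matrix.diagonal μ1 * Matrix.diagonal μ1 = (1 : Matrix (Fin n1) (Fin n1) ℝ) := by
    rw [Matrix.diagonal_mul_diagonal,
      show (fun i => μ1 i * μ1 i) = fun _ => (1:ℝ) from funext hμ1sq, Matrix.diagonal_one]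
  have hMM : muBlock μ1 σ * (muBlock μ1 σ)ᵀ = (n2 : ℝ) • (1 : Matrix (Fin n1) (Fin n1) ℝ) := by
    rw [muBlock_mul_transpose _ _ _ hσsq,
      show (fun i => μ1 i * μ1 i) = fun _ => (1:ℝ) from funext hμ1sq, Matrix.diagonal_one]
  have hMN : muBlock μ1 σ * (muBlock (fun _ : Fin n1 => (1:ℝ)) σ)ᵀ
      = (n2 : ℝ) • Matrix.diagonal μ1 := by
    rw [muBlock_mul_transpose _ _ _ hσsq];simp
  have hNM : muBlock (fun _ : Fin n1 => (1:ℝ)) σ * (muBlock μ1 σ)ᵀ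
      = (n2 : ℝ) • Matrix.diagonal μ1 := by
    rw [muBlock_mul_transpose _ _ _ hσsq]; simp
  have hNN : muBlock (fun _ : Fin n1 => (1:ℝ)) σ * (muBlock (fun _ : Fin n1 => (1:ℝ)) σ)ᵀ
      = (n2 : ℝ) • (1 : Matrix (Fin n1) (Fin n1) ℝ) := by
    rw [muBlock_mul_transpose _ _ _ hσsq]; simp
  rw [matrixEq n1 n2 (Matrix.diagonal μ1 * A1.map abs * Matrix.diagonal μ1) μ1 σ A2 hA2c
      hA2row hA2col hA2leaf μ2 hμ2leaf x, Matrix.det_submatrix_equiv_self]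
  letI inst1 : Invertible (x • (1 : Matrix (Fin n2 × Fin n1) (Fin n2 × Fin n1) ℝ)) :=
    invertibleSmulOne hx
  have hinv1 : ⅟(x • (1 : Matrix (Fin n2 × Fin n1) (Fin n2 × Fin n1) ℝ)) = x⁻¹ • 1 := rfl
  rw [Matrix.det_fromBlocks₂₂, hinv1]
  have hS1 :
      (Matrix.fromBlocks
          (Matrix.fromBlocks (x • 1) (-(Matrix.diagonal μ1 * A1.map abs * Matrix.diagonal μ1))
            (-(Matrix.diagonal μ1 * A1.map abs * Matrix.diagonal μ1)) (x • 1))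
          (Matrix.fromRows 0 ((-(μ2 0)) • Matrix.diagonal μ1))
          (Matrix.fromCols 0 ((-(μ2 0)) • Matrix.diagonal μ1))
          (x • 1))
        - Matrix.fromRows (Matrix.fromRows 0 (-(muBlock μ1 σ)))
            (-(muBlock (fun _ => (1:ℝ)) σ)) *
            (x⁻¹ • (1 : Matrix (Fin n2 × Fin n1) (Fin n2 × Fin n1) ℝ)) *
          Matrix.fromCols (Matrix.fromCols 0 (-(muBlock μ1 σ)ᵀ))
            (-(muBlock (fun _ => (1:ℝ)) σ)ᵀ)
      = Matrix.fromBlocks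
          (Matrix.fromBlocks (x • 1) (-(Matrix.diagonal μ1 * A1.map abs * Matrix.diagonal μ1))
            (-(Matrix.diagonal μ1 * A1.map abs * Matrix.diagonal μ1))
            ((x - (n2 : ℝ) * x⁻¹) • (1 : Matrix (Fin n1) (Fin n1) ℝ)))
          (Matrix.fromRows 0 ((-(μ2 0) - (n2 : ℝ) * x⁻¹) • Matrix.diagonal μ1))
          (Matrix.fromCols 0 ((-(μ2 0) - (n2 : ℝ) * x⁻¹) • Matrix.diagonal μ1))
          ((x - (n2 : ℝ) * x⁻¹) • (1 : Matrix (Fin n1) (Fin n1) ℝ)) := by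
    rw [Matrix.mul_smul, Matrix.mul_one, Matrix.smul_mul,
        Matrix.fromRows_mul_fromCols, Matrix.fromRows_mul_fromCols,
        Matrix.fromRows_mul, Matrix.mul_fromCols]
    simp only [Matrix.mul_zero, Matrix.zero_mul, Matrix.neg_mul, Matrix.mul_neg, neg_neg,
      neg_zero, hMM, hMN, hNM, hNN]
    rw [Matrix.fromBlocks_smul, Matrix.fromBlocks_smul, smul_fromRows, smul_fromColumns,
        fromBlocks_sub, fromBlocks_sub, fromRows_sub, fromColumns_sub]
    simp only [smul_zero, sub_zero, smul_smul, ← sub_smul, mul_comm x⁻¹ (n2:ℝ)]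
  rw [hS1]
  letI inst2 : Invertible ((x - (n2 : ℝ) * x⁻¹) • (1 : Matrix (Fin n1) (Fin n1) ℝ)) :=
    invertibleSmulOne hqne
  have hinv2 : ⅟((x - (n2 : ℝ) * x⁻¹) • (1 : Matrix (Fin n1) (Fin n1) ℝ))
      = (x - (n2 : ℝ) * x⁻¹)⁻¹ • 1 := rfl
  rw [Matrix.det_fromBlocks₂₂, hinv2]
  have hS2 :
      Matrix.fromBlocks (x • 1) (-(Matrix.diagonal μ1 * A1.map abs * Matrix.diagonal μ1))
          (-(Matrix.diagonal μ1 * A1.map abs * Matrix.diagonal μ1))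
          ((x - (n2 : ℝ) * x⁻¹) • (1 : Matrix (Fin n1) (Fin n1) ℝ))
        - Matrix.fromRows 0 ((-(μ2 0) - (n2 : ℝ) * x⁻¹) • Matrix.diagonal μ1) *
            ((x - (n2 : ℝ) * x⁻¹)⁻¹ • (1 : Matrix (Fin n1) (Fin n1) ℝ)) *
          Matrix.fromCols 0 ((-(μ2 0) - (n2 : ℝ) * x⁻¹) • Matrix.diagonal μ1)
      = Matrix.fromBlocks (x • 1) (-(Matrix.diagonal μ1 * A1.map abs * Matrix.diagonal μ1))
          (-(Matrix.diagonal μ1 * A1.map abs * Matrix.diagonal μ1))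
          (((x - (n2 : ℝ) * x⁻¹) - (x - (n2 : ℝ) * x⁻¹)⁻¹ *
              ((-(μ2 0) - (n2 : ℝ) * x⁻¹) * (-(μ2 0) - (n2 : ℝ) * x⁻¹))) •
            (1 : Matrix (Fin n1) (Fin n1) ℝ)) := by
    rw [Matrix.mul_smul, Matrix.mul_one, Matrix.smul_mul, Matrix.fromRows_mul_fromCols]
    simp only [Matrix.mul_zero, Matrix.zero_mul, Matrix.smul_mul, Matrix.mul_smul, hΦΦ,
      smul_smul]
    rw [Matrix.fromBlocks_smul, fromBlocks_sub]
    simp only [smul_zero, sub_zero, smul_smul, ← sub_smul]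
  rw [hS2]
  letI inst3 : Invertible (x • (1 : Matrix (Fin n1) (Fin n1) ℝ)) := invertibleSmulOne hx
  have hinv3 : ⅟(x • (1 : Matrix (Fin n1) (Fin n1) ℝ)) = x⁻¹ • 1 := rfl
  rw [Matrix.det_fromBlocks₁₁, hinv3]
  have hS3 :
      ((x - (n2 : ℝ) * x⁻¹) - (x - (n2 : ℝ) * x⁻¹)⁻¹ *
          ((-(μ2 0) - (n2 : ℝ) * x⁻¹) * (-(μ2 0) - (n2 : ℝ) * x⁻¹))) •
          (1 : Matrix (Fin n1) (Fin n1) ℝ)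
        - -(Matrix.diagonal μ1 * A1.map abs * Matrix.diagonal μ1) *
            (x⁻¹ • (1 : Matrix (Fin n1) (Fin n1) ℝ)) *
          -(Matrix.diagonal μ1 * A1.map abs * Matrix.diagonal μ1)
      = ((x - (n2 : ℝ) * x⁻¹) - (x - (n2 : ℝ) * x⁻¹)⁻¹ *
          ((-(μ2 0) - (n2 : ℝ) * x⁻¹) * (-(μ2 0) - (n2 : ℝ) * x⁻¹))) •
          (1 : Matrix (Fin n1) (Fin n1) ℝ)
        - x⁻¹ • ((Matrix.diagonal μ1 * A1.map abs * Matrix.diagonal μ1) *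
            (Matrix.diagonal μ1 * A1.map abs * Matrix.diagonal μ1)) := by
    simp only [Matrix.mul_smul, Matrix.mul_one, Matrix.smul_mul, Matrix.neg_mul,
      Matrix.mul_neg, smul_neg, neg_neg]
  rw [hS3]
  have hcomm : Matrix.diagonal ε * Matrix.diagonal μ1 = Matrix.diagonal μ1 * Matrix.diagonal ε := by
    rw [Matrix.diagonal_mul_diagonal, Matrix.diagonal_mul_diagonal]
    exact congrArg Matrix.diagonal (funext fun i => mul_comm _ _)
  have hGG : Matrix.diagonal (fun i => μ1 i * ε i) * Matrix.diagonal (fun i => μ1 i * ε i)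
      = (1 : Matrix (Fin n1) (Fin n1) ℝ) := by
    rw [Matrix.diagonal_mul_diagonal,
      show (fun i => μ1 i * ε i * (μ1 i * ε i)) = fun _ => (1:ℝ) from funext fun i => by
        rw [mul_mul_mul_comm, hμ1sq, hεsq, one_mul], Matrix.diagonal_one]
  have hA1μG : Matrix.diagonal μ1 * A1.map abs * Matrix.diagonal μ1
      = Matrix.diagonal (fun i => μ1 i * ε i) * A1 * Matrix.diagonal (fun i => μ1 i * ε i) := by
    rw [← hbal, ← Matrix.diagonal_mul_diagonal μ1 ε]
    calc Matrix.diagonal μ1 * (Matrix.diagonal ε * A1 * Matrix.diagonal ε) * Matrix.diagonal μ1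
        = Matrix.diagonal μ1 * Matrix.diagonal ε * A1 *
            (Matrix.diagonal ε * Matrix.diagonal μ1) := by
          simp only [Matrix.mul_assoc]
      _ = _ := by rw [hcomm]
  have hGA : (Matrix.diagonal μ1 * A1.map abs * Matrix.diagonal μ1) *
        (Matrix.diagonal μ1 * A1.map abs * Matrix.diagonal μ1)
      = Matrix.diagonal (fun i => μ1 i * ε i) * (A1 * A1) *
          Matrix.diagonal (fun i => μ1 i * ε i) := by
    rw [hA1μG]
    calc (Matrix.diagonal (fun i => μ1 i * ε i) * A1 * Matrix.diagonal (fun i => μ1 i * ε i)) *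
          (Matrix.diagonal (fun i => μ1 i * ε i) * A1 * Matrix.diagonal (fun i => μ1 i * ε i))
        = Matrix.diagonal (fun i => μ1 i * ε i) * A1 *
            (Matrix.diagonal (fun i => μ1 i * ε i) * Matrix.diagonal (fun i => μ1 i * ε i)) *
            A1 * Matrix.diagonal (fun i => μ1 i * ε i) := by
          simp only [Matrix.mul_assoc]
      _ = _ := by rw [hGG, Matrix.mul_one]; simp only [Matrix.mul_assoc]
  have hdet4 :
      (((x - (n2 : ℝ) * x⁻¹) - (x - (n2 : ℝ) * x⁻¹)⁻¹ *
            ((-(μ2 0) - (n2 : ℝ) * x⁻¹) * (-(μ2 0) - (n2 : ℝ) * x⁻¹))) •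
          (1 : Matrix (Fin n1) (Fin n1) ℝ)
        - x⁻¹ • ((Matrix.diagonal μ1 * A1.map abs * Matrix.diagonal μ1) *
            (Matrix.diagonal μ1 * A1.map abs * Matrix.diagonal μ1))).det
      = (((x - (n2 : ℝ) * x⁻¹) - (x - (n2 : ℝ) * x⁻¹)⁻¹ *
            ((-(μ2 0) - (n2 : ℝ) * x⁻¹) * (-(μ2 0) - (n2 : ℝ) * x⁻¹))) •
          (1 : Matrix (Fin n1) (Fin n1) ℝ)
        - x⁻¹ • (A1 * A1)).det := by
    rw [hGA]
    have hkey : ∀ (c d : ℝ) (Y : Matrix (Fin n1) (Fin n1) ℝ),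
        c • (1 : Matrix (Fin n1) (Fin n1) ℝ)
            - d • (Matrix.diagonal (fun i => μ1 i * ε i) * Y * Matrix.diagonal (fun i => μ1 i * ε i))
          = Matrix.diagonal (fun i => μ1 i * ε i) * (c • 1 - d • Y) *
              Matrix.diagonal (fun i => μ1 i * ε i) := by
      intro c d Y
      rw [Matrix.mul_sub, Matrix.sub_mul]
      congr 1
      · rw [Matrix.mul_smul, Matrix.mul_one, Matrix.smul_mul, hGG]
      · rw [Matrix.mul_smul, Matrix.smul_mul]
    rw [hkey, Matrix.det_mul, Matrix.det_mul]
    have hdG : (Matrix.diagonal (fun i => μ1 i * ε i)).det *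
        (Matrix.diagonal (fun i => μ1 i * ε i)).det = 1 := by
      rw [← Matrix.det_mul, hGG, Matrix.det_one]
    linear_combination (((x - (n2 : ℝ) * x⁻¹) - (x - (n2 : ℝ) * x⁻¹)⁻¹ *
            ((-(μ2 0) - (n2 : ℝ) * x⁻¹) * (-(μ2 0) - (n2 : ℝ) * x⁻¹))) •
          (1 : Matrix (Fin n1) (Fin n1) ℝ)
        - x⁻¹ • (A1 * A1)).det * hdG
  rw [hdet4, show A1 ^ 2 = A1 * A1 from pow_two A1]
  have hfact : (x ^ 4 - (2 * (n2 : ℝ) + 1) * x ^ 2 - 2 * (n2 : ℝ) * μ2 0 * x) •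
        (1 : Matrix (Fin n1) (Fin n1) ℝ) - (x ^ 2 - (n2 : ℝ)) • (A1 * A1)
      = (x * (x ^ 2 - (n2 : ℝ))) •
          (((x - (n2 : ℝ) * x⁻¹) - (x - (n2 : ℝ) * x⁻¹)⁻¹ *
              ((-(μ2 0) - (n2 : ℝ) * x⁻¹) * (-(μ2 0) - (n2 : ℝ) * x⁻¹))) •
            (1 : Matrix (Fin n1) (Fin n1) ℝ) - x⁻¹ • (A1 * A1)) := by
    rw [smul_sub, smul_smul, smul_smul]
    congr 1
    · congr 1
      have h1 : x - (n2 : ℝ) * x⁻¹ = (x ^ 2 - (n2 : ℝ)) * x⁻¹ := by field_simp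
      rw [h1, mul_inv, inv_inv]
      rcases hp with h | h <;> rw [h] <;> field_simp <;> ring
    · congr 1
      rw [mul_comm x, mul_assoc, mul_inv_cancel₀ hx, mul_one]
  rw [hfact]
  simp only [Matrix.det_smul, Matrix.det_one, mul_one, Fintype.card_prod, Fintype.card_fin]
  have h5 : (x - (n2 : ℝ) * x⁻¹) * x = x ^ 2 - (n2 : ℝ) := by field_simp
  have hnat : n2 * n1 = n1 * (n2 - 1) + n1 := by
    have h : n2 - 1 + 1 = n2 := Nat.sub_add_cancel hn2
    calc n2 * n1 = n1 * n2 := Nat.mul_comm _ _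
      _ = n1 * (n2 - 1 + 1) := by rw [h]
      _ = n1 * (n2 - 1) + n1 := Nat.mul_succ _ _
  rw [show x * (x ^ 2 - (n2 : ℝ)) = x * ((x - (n2 : ℝ) * x⁻¹) * x) from by rw [h5],
      hnat, pow_add, mul_pow, mul_pow]
  ring

end CoronaStarAux

/-- For `Γ₁` balanced on `n₁` vertices and `Γ₂` a signed star on `n₂+1`
vertices (center `v₁ = 0`, leaf edge signs `σ_j`, canonical marking `μ₂`),
`det(x·I − A(Γ₁⊛Γ₂)) = x^{n₁(n₂−1)} · det((x⁴ − (2n₂+1)x² − 2n₂·μ₂(v₁)·x)·I_{n₁} − (x² − n₂)·A₁²)`. -/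
theorem corona_adjacency_star (n1 n2 : ℕ) (hn2 : 1 ≤ n2)
    (A1 : Matrix (Fin n1) (Fin n1) ℝ) (hA1sym : A1.IsSymm) (hA1diag : ∀ i, A1 i i = 0)
    (hA1ent : ∀ i j, A1 i j = 1 ∨ A1 i j = 0 ∨ A1 i j = -1)
    (μ1 : Fin n1 → ℝ) (hμ1 : ∀ i, μ1 i = 1 ∨ μ1 i = -1)
    (hbal1 : ∃ ε : Fin n1 → ℝ, (∀ i, ε i = 1 ∨ ε i = -1) ∧
      Matrix.diagonal ε * A1 * Matrix.diagonal ε = A1.map abs)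
    (σ : Fin n2 → ℝ) (hσ : ∀ j, σ j = 1 ∨ σ j = -1)
    (A2 : Matrix (Fin (n2 + 1)) (Fin (n2 + 1)) ℝ)
    (hA2c : A2 0 0 = 0)
    (hA2row : ∀ j : Fin n2, A2 0 j.succ = σ j)
    (hA2col : ∀ j : Fin n2, A2 j.succ 0 = σ j)
    (hA2leaf : ∀ j k : Fin n2, A2 j.succ k.succ = 0)
    (μ2 : Fin (n2 + 1) → ℝ)
    (hμ2c : μ2 0 = ∏ j, σ j)
    (hμ2leaf : ∀ j : Fin n2, μ2 j.succ = σ j)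
    (x : ℝ) :
    (x • 1 -
        coronaStar (Matrix.diagonal μ1 * A1.map abs * Matrix.diagonal μ1) A2 μ1 μ2).det
      = x ^ (n1 * (n2 - 1)) *
        ((x ^ 4 - (2 * (n2 : ℝ) + 1) * x ^ 2 - 2 * (n2 : ℝ) * μ2 0 * x) •
            (1 : Matrix (Fin n1) (Fin n1) ℝ)
          - (x ^ 2 - (n2 : ℝ)) • A1 ^ 2).det := by
  have hkey := CoronaStarAux.key n1 n2 hn2 A1 μ1 hμ1 hbal1 σ hσ A2 hA2c hA2row hA2col
    hA2leaf μ2 hμ2c hμ2leaf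
  set f : ℝ → ℝ := fun y =>
    (y • 1 - coronaStar (Matrix.diagonal μ1 * A1.map abs * Matrix.diagonal μ1) A2 μ1 μ2).det
    with hf_def
  set g : ℝ → ℝ := fun y => y ^ (n1 * (n2 - 1)) *
    ((y ^ 4 - (2 * (n2 : ℝ) + 1) * y ^ 2 - 2 * (n2 : ℝ) * μ2 0 * y) •
        (1 : Matrix (Fin n1) (Fin n1) ℝ)
      - (y ^ 2 - (n2 : ℝ)) • A1 ^ 2).det with hg_def
  have hbad : ({y : ℝ | y = 0 ∨ y ^ 2 - (n2 : ℝ) = 0} : Set ℝ).Countable := by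
    have hsub : {y : ℝ | y = 0 ∨ y ^ 2 - (n2 : ℝ) = 0}
        ⊆ {(0 : ℝ), Real.sqrt n2, -Real.sqrt n2} := by
      intro y hy
      rcases hy with h | h
      · exact Set.mem_insert_iff.2 (Or.inl h)
      · have ha : Real.sqrt n2 ^ 2 = (n2 : ℝ) := Real.sq_sqrt (by positivity)
        have hfac : (y - Real.sqrt n2) * (y + Real.sqrt n2) = 0 := by
          linear_combination h - ha
        rcases mul_eq_zero.1 hfac with h' | h'
        · refine Set.mem_insert_iff.2 (Or.inr (Set.mem_insert_iff.2 (Or.inl ?_)))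
          linarith
        · refine Set.mem_insert_iff.2 (Or.inr (Set.mem_insert_iff.2 (Or.inr ?_)))
          simp only [Set.mem_singleton_iff]
          linarith
    exact ((Set.finite_singleton _).insert _ |>.insert _ |>.subset hsub).countable
  have hdense : Dense ({y : ℝ | y = 0 ∨ y ^ 2 - (n2 : ℝ) = 0} : Set ℝ)ᶜ :=
    Set.Countable.dense_compl ℝ hbad
  have hfc : Continuous f := by
    apply Continuous.matrix_det
    exact (continuous_id.smul continuous_const).sub continuous_const
  have hgc : Continuous g := by
    apply Continuous.mul (continuous_pow _)
    apply Continuous.matrix_det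
    apply Continuous.sub
    · exact Continuous.smul (((continuous_pow 4).sub
        (continuous_const.mul (continuous_pow 2))).sub
        (continuous_const.mul continuous_id)) continuous_const
    · exact Continuous.smul ((continuous_pow 2).sub continuous_const) continuous_const
  have heq : f = g := by
    refine Continuous.ext_on hdense hfc hgc ?_
    intro y hy
    simp only [Set.mem_compl_iff, Set.mem_setOf_eq, not_or] at hy
    exact hkey y hy.1 hy.2
  exact congrFun heq x
end

section
/- Let Γ1 and Γ2 be signed graphs of the same order n with adjacency matrices A1, A2 and markings μ1, μ2 such that the μ-signed adjacency matrices Φ1·|A1|·Φ1 and Φ2·|A2|·Φ2 have the same characteristic polynomial. Then for every signed graph Γ (with marking), the adjacency matrices A(Γ1⊛Γ) and A(Γ2⊛Γ) have the same characteristic polynomial, i.e., Γ1⊛Γ and Γ2⊛Γ are A-cospectral. -/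
open Matrix Kronecker BigOperators

section Aux

open Polynomial

lemma my_charpoly_conj {N R : Type*} [DecidableEq N] [Fintype N] [CommRing R]
    (P Q M : Matrix N N R) (h : P * Q = 1) :
    (P * M * Q).charpoly = M.charpoly := by
  have hmapmul : ∀ (A B : Matrix N N R), (A * B).map (C : R → R[X]) = A.map C * B.map C := by
    intro A B; exact Matrix.map_mul
  have hscal : ∀ (A : Matrix N N R[X]), A * Matrix.scalar N (X : R[X]) = Matrix.scalar N X * A :=
    fun A => (Matrix.scalar_commute (X : R[X]) (fun r => Commute.all _ _) A).symm
  have hc : charmatrix (P * M * Q) = P.map C * charmatrix M * Q.map C := by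
    simp only [charmatrix, RingHom.mapMatrix_apply]
    rw [Matrix.mul_sub, Matrix.sub_mul, ← hmapmul, ← hmapmul]
    congr 1
    rw [mul_assoc, ← hscal, ← mul_assoc, ← hmapmul, h]
    simp
  have hdet : (P.map (C : R → R[X])).det * (Q.map C).det = 1 := by
    rw [← det_mul, ← hmapmul, h]
    simp
  rw [Matrix.charpoly, hc, det_mul, det_mul, Matrix.charpoly]
  ring_nf
  rw [mul_comm ((P.map C).det), mul_assoc, hdet, mul_one]

lemma my_charpoly_diagonal {N R : Type*} [DecidableEq N] [Fintype N] [CommRing R]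
    (d : N → R) : (Matrix.diagonal d).charpoly = ∏ i, (X - C (d i)) := by
  have hc : charmatrix (Matrix.diagonal d) = Matrix.diagonal fun i => X - C (d i) := by
    simp only [charmatrix, RingHom.mapMatrix_apply, scalar_apply]
    rw [Matrix.diagonal_map (by simp), ← diagonal_sub]
  rw [Matrix.charpoly, hc, det_diagonal]

/-- Cospectral hermitian real matrices are similar. -/
lemma my_exists_conj {n : ℕ} (M1 M2 : Matrix (Fin n) (Fin n) ℝ)
    (h1 : M1.IsHermitian) (h2 : M2.IsHermitian) (h : M1.charpoly = M2.charpoly) :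
    ∃ P Q : Matrix (Fin n) (Fin n) ℝ, P * Q = 1 ∧ Q * P = 1 ∧ P * M1 * Q = M2 := by
  classical
  set U1 : Matrix (Fin n) (Fin n) ℝ := (h1.eigenvectorUnitary : Matrix (Fin n) (Fin n) ℝ)
    with hU1
  set U2 : Matrix (Fin n) (Fin n) ℝ := (h2.eigenvectorUnitary : Matrix (Fin n) (Fin n) ℝ)
    with hU2
  have hU1l : star U1 * U1 = 1 := (Unitary.mem_iff.mp h1.eigenvectorUnitary.2).1
  have hU1r : U1 * star U1 = 1 := (Unitary.mem_iff.mp h1.eigenvectorUnitary.2).2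
  have hU2l : star U2 * U2 = 1 := (Unitary.mem_iff.mp h2.eigenvectorUnitary.2).1
  have hU2r : U2 * star U2 = 1 := (Unitary.mem_iff.mp h2.eigenvectorUnitary.2).2
  set d1 : Fin n → ℝ := RCLike.ofReal ∘ h1.eigenvalues with hd1
  set d2 : Fin n → ℝ := RCLike.ofReal ∘ h2.eigenvalues with hd2
  have hs1 : M1 = U1 * Matrix.diagonal d1 * star U1 := h1.spectral_theorem
  have hs2 : M2 = U2 * Matrix.diagonal d2 * star U2 := h2.spectral_theorem
  clear_value U1 U2 d1 d2
  -- equal charpolys of the diagonals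
  have hcd : (Matrix.diagonal d1).charpoly = (Matrix.diagonal d2).charpoly := by
    have e1 : M1.charpoly = (Matrix.diagonal d1).charpoly := by
      rw [hs1]; exact my_charpoly_conj _ _ _ hU1r
    have e2 : M2.charpoly = (Matrix.diagonal d2).charpoly := by
      rw [hs2]; exact my_charpoly_conj _ _ _ hU2r
    rw [← e1, ← e2, h]
  -- multisets of eigenvalues coincide
  have hms : Multiset.map d1 Finset.univ.val = Multiset.map d2 Finset.univ.val := by
    have hprod : ∀ d : Fin n → ℝ,
        (Multiset.map (fun r => X - C r) (Multiset.map d Finset.univ.val)).prod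
          = (Matrix.diagonal d).charpoly := by
      intro d
      rw [my_charpoly_diagonal, Multiset.map_map, Finset.prod_eq_multiset_prod]
      rfl
    have := congrArg Polynomial.roots ((hprod d1).trans (hcd.trans (hprod d2).symm))
    rwa [roots_multiset_prod_X_sub_C, roots_multiset_prod_X_sub_C] at this
  -- extract a permutation
  have hofn : ∀ (d : Fin n → ℝ) (σ : Equiv.Perm (Fin n)),
      ((List.ofFn (d ∘ σ)) : Multiset ℝ) = Multiset.map d Finset.univ.val := by
    intro d σ
    rw [← Fin.univ_val_map (d ∘ σ), ← Multiset.map_map]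
    congr 1
    have h := congrArg Finset.val (Finset.map_univ_equiv σ)
    simpa [Finset.map] using h
  have hsorted : d1 ∘ Tuple.sort d1 = d2 ∘ Tuple.sort d2 := by
    apply List.ofFn_injective
    refine (fun hp h1 h2 => List.Perm.eq_of_sortedLE h1 h2 hp) ?_ ?_ ?_
    · rw [← Multiset.coe_eq_coe, hofn, hofn, hms]
    · exact List.sortedLE_ofFn_iff.mpr (Tuple.monotone_sort d1)
    · exact List.sortedLE_ofFn_iff.mpr (Tuple.monotone_sort d2)
  set e : Equiv.Perm (Fin n) := ((Tuple.sort d2)⁻¹ : Equiv.Perm (Fin n)).trans (Tuple.sort d1)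
    with he
  have hde : d2 = d1 ∘ e := by
    funext x
    have := congrFun hsorted ((Tuple.sort d2)⁻¹ x)
    simpa [he, Function.comp] using this.symm
  clear_value e
  -- permutation matrices
  set E : Matrix (Fin n) (Fin n) ℝ := (1 : Matrix (Fin n) (Fin n) ℝ).submatrix e id with hE
  set E' : Matrix (Fin n) (Fin n) ℝ := (1 : Matrix (Fin n) (Fin n) ℝ).submatrix id e with hE'
  have hEE' : E * E' = 1 := by
    have h := Matrix.submatrix_mul_equiv (1 : Matrix (Fin n) (Fin n) ℝ)
      (1 : Matrix (Fin n) (Fin n) ℝ) ⇑e (Equiv.refl (Fin n)) ⇑e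
    simp only [Equiv.coe_refl, one_mul] at h
    rw [hE, hE', h, Matrix.submatrix_one_equiv]
  have hE'E : E' * E = 1 := by
    have h := Matrix.submatrix_mul_equiv (1 : Matrix (Fin n) (Fin n) ℝ)
      (1 : Matrix (Fin n) (Fin n) ℝ) id e id
    simp only [one_mul] at h
    rw [hE, hE', h, Matrix.submatrix_id_id]
  have hED : E * Matrix.diagonal d1 * E' = Matrix.diagonal d2 := by
    have h1 := Matrix.submatrix_mul_equiv (1 : Matrix (Fin n) (Fin n) ℝ)
      (Matrix.diagonal d1) ⇑e (Equiv.refl (Fin n)) id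
    simp only [Equiv.coe_refl, one_mul, Matrix.submatrix_id_id] at h1
    have h2 := Matrix.submatrix_mul_equiv (Matrix.diagonal d1)
      (1 : Matrix (Fin n) (Fin n) ℝ) ⇑e (Equiv.refl (Fin n)) ⇑e
    simp only [Equiv.coe_refl, mul_one, Matrix.submatrix_id_id] at h2
    rw [hE, hE', h1, h2, Matrix.submatrix_diagonal_equiv, hde]
  clear_value E E'
  have key : ∀ A B C D : Matrix (Fin n) (Fin n) ℝ, B * C = 1 → A * D = 1 →
      A * B * (C * D) = 1 := by
    intro A B C D hBC hAD
    rw [mul_assoc, ← mul_assoc B, hBC, one_mul, hAD]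
  refine ⟨U2 * E * star U1, U1 * E' * star U2, ?_, ?_, ?_⟩
  · calc U2 * E * star U1 * (U1 * E' * star U2)
        = U2 * (E * ((star U1 * U1) * (E' * star U2))) := by
          simp only [mul_assoc]
      _ = 1 := by rw [hU1l, one_mul]; rw [← mul_assoc]; exact key _ _ _ _ hEE' hU2r
  · calc U1 * E' * star U2 * (U2 * E * star U1)
        = U1 * (E' * ((star U2 * U2) * (E * star U1))) := by
          simp only [mul_assoc]
      _ = 1 := by rw [hU2l, one_mul]; rw [← mul_assoc]; exact key _ _ _ _ hE'E hU1r
  · rw [hs1, hs2, ← hED]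
    calc U2 * E * star U1 * (U1 * Matrix.diagonal d1 * star U1) * (U1 * E' * star U2)
        = U2 * (E * ((star U1 * U1) * (Matrix.diagonal d1 *
            ((star U1 * U1) * (E' * star U2))))) := by simp only [mul_assoc]
      _ = U2 * (E * Matrix.diagonal d1 * E') * star U2 := by
          rw [hU1l, one_mul, one_mul]; simp only [mul_assoc]

end Aux

/-- helper: `νᵀ ⊗ M`. -/
noncomputable def rowK {n m : ℕ} (ν : Fin m → ℝ) (M : Matrix (Fin n) (Fin n) ℝ) :
    Matrix (Fin n) (Fin m × Fin n) ℝ :=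
  Matrix.of fun i kj => ν kj.1 * M i kj.2

lemma muBlock_eq {n m : ℕ} (μ : Fin n → ℝ) (ν : Fin m → ℝ) :
    muBlock μ ν = rowK ν (Matrix.diagonal μ) := rfl

lemma mul_rowK {n m : ℕ} (ν : Fin m → ℝ) (M' M : Matrix (Fin n) (Fin n) ℝ) :
    M' * rowK ν M = rowK ν (M' * M) := by
  ext i kj
  simp only [rowK, Matrix.mul_apply, Matrix.of_apply, Finset.mul_sum]
  exact Finset.sum_congr rfl fun a _ => by ring

lemma rowK_mul_kron {n m : ℕ} (ν : Fin m → ℝ) (M N : Matrix (Fin n) (Fin n) ℝ) :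
    rowK ν M * ((1 : Matrix (Fin m) (Fin m) ℝ) ⊗ₖ N) = rowK ν (M * N) := by
  ext i kj
  obtain ⟨k, j⟩ := kj
  simp only [rowK, Matrix.mul_apply, Matrix.of_apply, kroneckerMap_apply,
    Fintype.sum_prod_type, Matrix.one_apply, mul_ite, mul_one, mul_zero, ite_mul, zero_mul]
  rw [Finset.sum_comm]
  simp only [Finset.sum_ite_eq', Finset.mem_univ, if_true, Finset.mul_sum]
  exact Finset.sum_congr rfl fun a _ => by ring

/-- If `Γ₁, Γ₂` have the same order `n` and their `μ`-signed adjacency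
matrices `Φ₁·|A₁|·Φ₁` and `Φ₂·|A₂|·Φ₂` are cospectral, then for every signed graph `Γ`,
`Γ₁⊛Γ` and `Γ₂⊛Γ` are `A`-cospectral. -/
theorem corona_A_cospectral_left (n : ℕ)
    (A1 : Matrix (Fin n) (Fin n) ℝ) (hA1sym : A1.IsSymm) (hA1diag : ∀ i, A1 i i = 0)
    (hA1ent : ∀ i j, A1 i j = 1 ∨ A1 i j = 0 ∨ A1 i j = -1)
    (μ1 : Fin n → ℝ) (hμ1 : ∀ i, μ1 i = 1 ∨ μ1 i = -1)
    (A2 : Matrix (Fin n) (Fin n) ℝ) (hA2sym : A2.IsSymm) (hA2diag : ∀ i, A2 i i = 0)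
    (hA2ent : ∀ i j, A2 i j = 1 ∨ A2 i j = 0 ∨ A2 i j = -1)
    (μ2 : Fin n → ℝ) (hμ2 : ∀ i, μ2 i = 1 ∨ μ2 i = -1)
    (hcospec : (Matrix.diagonal μ1 * A1.map abs * Matrix.diagonal μ1).charpoly
      = (Matrix.diagonal μ2 * A2.map abs * Matrix.diagonal μ2).charpoly)
    (m : ℕ) (B : Matrix (Fin m) (Fin m) ℝ) (hBsym : B.IsSymm) (hBdiag : ∀ i, B i i = 0)
    (hBent : ∀ i j, B i j = 1 ∨ B i j = 0 ∨ B i j = -1)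
    (ν : Fin m → ℝ) (hν : ∀ i, ν i = 1 ∨ ν i = -1) :
    (coronaStar (Matrix.diagonal μ1 * A1.map abs * Matrix.diagonal μ1) B μ1 ν).charpoly
      = (coronaStar (Matrix.diagonal μ2 * A2.map abs * Matrix.diagonal μ2) B μ2 ν).charpoly := by
  classical
  set M1 : Matrix (Fin n) (Fin n) ℝ :=
    Matrix.diagonal μ1 * A1.map abs * Matrix.diagonal μ1 with hM1
  set M2 : Matrix (Fin n) (Fin n) ℝ :=
    Matrix.diagonal μ2 * A2.map abs * Matrix.diagonal μ2 with hM2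
  -- the signed adjacency matrices are hermitian
  have hherm : ∀ (A : Matrix (Fin n) (Fin n) ℝ) (μ : Fin n → ℝ), A.IsSymm →
      (Matrix.diagonal μ * A.map abs * Matrix.diagonal μ).IsHermitian := by
    intro A μ hA
    rw [Matrix.IsHermitian, Matrix.conjTranspose_eq_transpose_of_trivial,
      Matrix.transpose_mul, Matrix.transpose_mul, Matrix.diagonal_transpose,
      (hA.map abs), mul_assoc]
  obtain ⟨P, Q, hPQ, hQP, hconj⟩ :=
    my_exists_conj M1 M2 (hherm A1 μ1 hA1sym) (hherm A2 μ2 hA2sym) hcospec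
  -- squares of the markings
  have hsq : ∀ (μ : Fin n → ℝ), (∀ i, μ i = 1 ∨ μ i = -1) →
      Matrix.diagonal μ * Matrix.diagonal μ = 1 := by
    intro μ hμ
    rw [Matrix.diagonal_mul_diagonal]
    have h1 : (fun i => μ i * μ i) = fun _ => (1 : ℝ) :=
      funext fun i => by rcases hμ i with h | h <;> simp [h]
    rw [h1, Matrix.diagonal_one]
  have hΦ : Matrix.diagonal μ1 * Matrix.diagonal μ1 = 1 := hsq μ1 hμ1
  have hΨ : Matrix.diagonal μ2 * Matrix.diagonal μ2 = 1 := hsq μ2 hμ2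
  set Φ : Matrix (Fin n) (Fin n) ℝ := Matrix.diagonal μ1 with hΦdef
  set Ψ : Matrix (Fin n) (Fin n) ℝ := Matrix.diagonal μ2 with hΨdef
  set R1 : Matrix (Fin n) (Fin n) ℝ := Ψ * P * Φ with hR1
  set R2 : Matrix (Fin n) (Fin n) ℝ := Φ * Q * Ψ with hR2
  have hR12 : R1 * R2 = 1 := by
    calc R1 * R2 = Ψ * (P * ((Φ * Φ) * (Q * Ψ))) := by rw [hR1, hR2]; simp only [mul_assoc]
      _ = 1 := by rw [hΦ, one_mul, ← mul_assoc P Q Ψ, hPQ, one_mul, hΨ]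
  -- the big conjugating matrices
  set P2 : Matrix (Fin n ⊕ Fin n) (Fin n ⊕ Fin n) ℝ := Matrix.fromBlocks P 0 0 P with hP2
  set Q2 : Matrix (Fin n ⊕ Fin n) (Fin n ⊕ Fin n) ℝ := Matrix.fromBlocks Q 0 0 Q with hQ2
  set PP : Matrix ((Fin n ⊕ Fin n) ⊕ Fin m × Fin n) ((Fin n ⊕ Fin n) ⊕ Fin m × Fin n) ℝ :=
    Matrix.fromBlocks P2 0 0 ((1 : Matrix (Fin m) (Fin m) ℝ) ⊗ₖ R1) with hPP
  set QQ : Matrix ((Fin n ⊕ Fin n) ⊕ Fin m × Fin n) ((Fin n ⊕ Fin n) ⊕ Fin m × Fin n) ℝ :=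
    Matrix.fromBlocks Q2 0 0 ((1 : Matrix (Fin m) (Fin m) ℝ) ⊗ₖ R2) with hQQ
  have hP2Q2 : P2 * Q2 = 1 := by
    rw [hP2, hQ2, Matrix.fromBlocks_multiply]
    simp [hPQ, Matrix.fromBlocks_one]
  have hkron : ((1 : Matrix (Fin m) (Fin m) ℝ) ⊗ₖ R1) *
      ((1 : Matrix (Fin m) (Fin m) ℝ) ⊗ₖ R2) = 1 := by
    rw [← Matrix.mul_kronecker_mul, one_mul, hR12, Matrix.one_kronecker_one]
  clear_value R1 R2
  have hPPQQ : PP * QQ = 1 := by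
    rw [hPP, hQQ, Matrix.fromBlocks_multiply]
    simp only [Matrix.mul_zero, Matrix.zero_mul, add_zero, zero_add, hP2Q2, hkron]
    exact Matrix.fromBlocks_one
  -- block computations
  have hkey1 : P * Φ * (Φ * Q * Ψ) = Ψ := by
    calc P * Φ * (Φ * Q * Ψ) = P * ((Φ * Φ) * (Q * Ψ)) := by simp only [mul_assoc]
      _ = Ψ := by rw [hΦ, one_mul, ← mul_assoc, hPQ, one_mul]
  have hkey2 : Qᵀ * Φ * (Φ * Pᵀ * Ψ) = Ψ := by
    calc Qᵀ * Φ * (Φ * Pᵀ * Ψ) = Qᵀ * ((Φ * Φ) * (Pᵀ * Ψ)) := by simp only [mul_assoc]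
      _ = Ψ := by
          rw [hΦ, one_mul, ← mul_assoc, ← Matrix.transpose_mul, hPQ, Matrix.transpose_one,
            one_mul]
  have hmb : P * muBlock μ1 ν * ((1 : Matrix (Fin m) (Fin m) ℝ) ⊗ₖ R2) = muBlock μ2 ν := by
    rw [muBlock_eq, mul_rowK, rowK_mul_kron, muBlock_eq]
    rw [hR2, ← hΦdef, ← hΨdef, hkey1]
  have hR1T : R1ᵀ = Φ * Pᵀ * Ψ := by
    rw [hR1, Matrix.transpose_mul, Matrix.transpose_mul, hΦdef, hΨdef,
      Matrix.diagonal_transpose, Matrix.diagonal_transpose, ← hΦdef, ← hΨdef, ← mul_assoc]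
  have hmbT : ((1 : Matrix (Fin m) (Fin m) ℝ) ⊗ₖ R1) * (muBlock μ1 ν)ᵀ * Q
      = (muBlock μ2 ν)ᵀ := by
    have h : Qᵀ * muBlock μ1 ν * ((1 : Matrix (Fin m) (Fin m) ℝ) ⊗ₖ R1ᵀ) = muBlock μ2 ν := by
      rw [muBlock_eq, mul_rowK, rowK_mul_kron, muBlock_eq, ← hΦdef, ← hΨdef, hR1T]
      rw [hkey2]
    have h2 := congrArg Matrix.transpose h
    rw [Matrix.transpose_mul, Matrix.transpose_mul, Matrix.transpose_transpose,
      ← Matrix.kroneckerMap_transpose, Matrix.transpose_one, Matrix.transpose_transpose]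
      at h2
    exact (Matrix.mul_assoc _ _ _).trans h2
  -- the conjugation identity for the corona matrices
  have hcor : PP * coronaStar M1 B μ1 ν * QQ = coronaStar M2 B μ2 ν := by
    rw [coronaStar, coronaStar, hPP, hQQ, hP2, hQ2, Matrix.fromBlocks_multiply,
      Matrix.fromBlocks_multiply]
    rw [Matrix.fromBlocks_inj]
    refine ⟨?_, ?_, ?_, ?_⟩
    · -- top-left block
      simp only [Matrix.mul_zero, Matrix.zero_mul, add_zero, zero_add]
      rw [Matrix.fromBlocks_multiply, Matrix.fromBlocks_multiply]
      simp [hconj]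
    · -- top-right block
      simp only [Matrix.mul_zero, Matrix.zero_mul, add_zero, zero_add]
      rw [Matrix.fromBlocks_mul_fromRows]
      simp only [Matrix.mul_zero, Matrix.zero_mul, add_zero, zero_add]
      rw [Matrix.fromRows_mul, Matrix.zero_mul, hmb]
    · -- bottom-left block
      simp only [Matrix.mul_zero, Matrix.zero_mul, add_zero, zero_add]
      rw [Matrix.mul_fromCols, Matrix.mul_zero, Matrix.fromCols_mul_fromBlocks]
      simp only [Matrix.mul_zero, Matrix.zero_mul, add_zero, zero_add]
      rw [hmbT]
    · -- bottom-right block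
      simp only [Matrix.mul_zero, Matrix.zero_mul, add_zero, zero_add]
      rw [← Matrix.mul_kronecker_mul, ← Matrix.mul_kronecker_mul,
        one_mul, mul_one, mul_one, hR12]
  calc (coronaStar M1 B μ1 ν).charpoly
      = (PP * coronaStar M1 B μ1 ν * QQ).charpoly := (my_charpoly_conj _ _ _ hPPQQ).symm
    _ = (coronaStar M2 B μ2 ν).charpoly := by rw [hcor]
end

section
/- Let Γ1 and Γ2 be signed graphs of the same order n with adjacency matrices A1, A2 and markings μ1, μ2 such that A1 and A2 have the same characteristic polynomial and the signed coronals agree, χ_{A1}(x) = χ_{A2}(x) for every real x at which both are defined. Then for every signed graph Γ (with marking), the adjacency matrices A(Γ⊛Γ1) and A(Γ⊛Γ2) have the same characteristic polynomial, i.e., Γ⊛Γ1 and Γ⊛Γ2 are A-cospectral. -/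
open Matrix Kronecker BigOperators

lemma eval_charpoly' {N : Type} [Fintype N] [DecidableEq N] (M : Matrix N N ℝ) (x : ℝ) :
    M.charpoly.eval x = (x • (1 : Matrix N N ℝ) - M).det := by
  rw [Matrix.charpoly, ← Polynomial.coe_evalRingHom, RingHom.map_det]
  congr 1
  ext i j
  by_cases h : i = j <;>
    simp [Matrix.charmatrix_apply, Matrix.diagonal_apply, h, Matrix.one_apply]

lemma muBlock_mul_kron_mul_tr {n m : ℕ} (μ : Fin n → ℝ) (ν : Fin m → ℝ)
    (hν : ∀ i, ν i * ν i = 1) (R : Matrix (Fin n) (Fin n) ℝ) :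
    muBlock ν μ * (R ⊗ₖ (1 : Matrix (Fin m) (Fin m) ℝ)) * (muBlock ν μ)ᵀ
      = (μ ⬝ᵥ (R *ᵥ μ)) • (1 : Matrix (Fin m) (Fin m) ℝ) := by
  ext i i'
  simp only [mul_apply, muBlock, Matrix.transpose_apply, Matrix.of_apply,
    kroneckerMap_apply, Fintype.sum_prod_type, Matrix.diagonal_apply, Matrix.one_apply,
    Matrix.smul_apply, smul_eq_mul, dotProduct, mulVec, mul_ite, ite_mul, mul_zero, zero_mul,
    mul_one, one_mul, Finset.sum_ite_eq, Finset.sum_ite_eq', Finset.mem_univ, if_true]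
  by_cases h : i = i'
  · subst h
    simp only [if_true, Finset.sum_mul, Finset.mul_sum]
    rw [Finset.sum_comm]
    refine Finset.sum_congr rfl fun a _ => Finset.sum_congr rfl fun b _ => ?_
    linear_combination (μ a * R a b * μ b) * hν i
  · simp [h]

lemma fromBlocks_sub {l m n o : Type} (A A' : Matrix l m ℝ) (B B' : Matrix l n ℝ)
    (C C' : Matrix o m ℝ) (D D' : Matrix o n ℝ) :
    Matrix.fromBlocks A B C D - Matrix.fromBlocks A' B' C' D' =
      Matrix.fromBlocks (A - A') (B - B') (C - C') (D - D') := by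
  simp [sub_eq_add_neg, Matrix.fromBlocks_neg, Matrix.fromBlocks_add]

lemma det_coronaStar {n m : ℕ} (A : Matrix (Fin n) (Fin n) ℝ) (μ : Fin n → ℝ)
    (Bμ : Matrix (Fin m) (Fin m) ℝ) (ν : Fin m → ℝ) (hν : ∀ i, ν i * ν i = 1)
    (x : ℝ) (hA : IsUnit (x • (1 : Matrix (Fin n) (Fin n) ℝ) - A).det) :
    (x • (1 : Matrix _ _ ℝ) - coronaStar Bμ A ν μ).det
      = (x • (1 : Matrix (Fin n) (Fin n) ℝ) - A).det ^ m *
        (Matrix.fromBlocks (x • (1 : Matrix (Fin m) (Fin m) ℝ)) (-Bμ) (-Bμ)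
          ((x - coronal A μ x) • (1 : Matrix (Fin m) (Fin m) ℝ))).det := by
  set R := x • (1 : Matrix (Fin n) (Fin n) ℝ) - A with hR
  set M := muBlock ν μ with hM
  have hD : x • (1 : Matrix (Fin n × Fin m) (Fin n × Fin m) ℝ)
      - A ⊗ₖ (1 : Matrix (Fin m) (Fin m) ℝ) = R ⊗ₖ 1 := by
    ext ⟨i,k⟩ ⟨j,l⟩
    simp only [Matrix.sub_apply, Matrix.smul_apply, Matrix.one_apply, kroneckerMap_apply,
      smul_eq_mul, Prod.mk.injEq, Prod.ext_iff, hR]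
    by_cases h1 : i = j <;> by_cases h2 : k = l <;> simp [h1, h2] <;> ring
  have hdetD : (R ⊗ₖ (1 : Matrix (Fin m) (Fin m) ℝ)).det = R.det ^ m := by
    rw [Matrix.det_kronecker]; simp
  haveI : Invertible (R ⊗ₖ (1 : Matrix (Fin m) (Fin m) ℝ)) :=
    Matrix.invertibleOfIsUnitDet _ (by rw [hdetD]; exact hA.pow m)
  have key : x • (1 : Matrix ((Fin m ⊕ Fin m) ⊕ Fin n × Fin m) _ ℝ) - coronaStar Bμ A ν μ
      = Matrix.fromBlocks
          (Matrix.fromBlocks (x • 1) (-Bμ) (-Bμ) (x • 1))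
          (-(Matrix.fromRows 0 M))
          (-(Matrix.fromCols 0 Mᵀ))
          (R ⊗ₖ 1) := by
    rw [coronaStar, show (1 : Matrix ((Fin m ⊕ Fin m) ⊕ Fin n × Fin m) _ ℝ)
        = Matrix.fromBlocks (Matrix.fromBlocks 1 0 0 1) 0 0 1 by
          rw [Matrix.fromBlocks_one, Matrix.fromBlocks_one],
      Matrix.fromBlocks_smul, Matrix.fromBlocks_smul, fromBlocks_sub, fromBlocks_sub, ← hD]
    simp [hM]
  rw [key, Matrix.det_fromBlocks₂₂, Matrix.invOf_eq_nonsing_inv, Matrix.inv_kronecker,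
    inv_one, hdetD]
  congr 1
  have : (-(Matrix.fromRows (0 : Matrix (Fin m) (Fin n × Fin m) ℝ) M))
      * (R⁻¹ ⊗ₖ (1 : Matrix (Fin m) (Fin m) ℝ))
      * (-(Matrix.fromCols (0 : Matrix (Fin n × Fin m) (Fin m) ℝ) Mᵀ))
      = Matrix.fromBlocks 0 0 0 (coronal A μ x • (1 : Matrix (Fin m) (Fin m) ℝ)) := by
    simp only [Matrix.neg_mul, Matrix.mul_neg, neg_neg]
    rw [Matrix.fromRows_mul,
      Matrix.fromRows_mul_fromCols, Matrix.zero_mul, Matrix.mul_zero,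
      Matrix.zero_mul, Matrix.mul_zero, muBlock_mul_kron_mul_tr μ ν hν]
    rw [coronal, hR]
  rw [this, fromBlocks_sub]
  congr 1 <;> simp [sub_smul]

/-- If `Γ₁, Γ₂` have the same order `n`, `A₁` and `A₂` are cospectral and
their signed coronals agree wherever both are defined, then for every signed graph `Γ`,
`Γ⊛Γ₁` and `Γ⊛Γ₂` are `A`-cospectral. -/
theorem corona_A_cospectral_right (n : ℕ)
    (A1 : Matrix (Fin n) (Fin n) ℝ) (hA1sym : A1.IsSymm) (hA1diag : ∀ i, A1 i i = 0)
    (hA1ent : ∀ i j, A1 i j = 1 ∨ A1 i j = 0 ∨ A1 i j = -1)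
    (μ1 : Fin n → ℝ) (hμ1 : ∀ i, μ1 i = 1 ∨ μ1 i = -1)
    (A2 : Matrix (Fin n) (Fin n) ℝ) (hA2sym : A2.IsSymm) (hA2diag : ∀ i, A2 i i = 0)
    (hA2ent : ∀ i j, A2 i j = 1 ∨ A2 i j = 0 ∨ A2 i j = -1)
    (μ2 : Fin n → ℝ) (hμ2 : ∀ i, μ2 i = 1 ∨ μ2 i = -1)
    (hcospec : A1.charpoly = A2.charpoly)
    (hcoronal : ∀ x : ℝ, IsUnit (x • (1 : Matrix (Fin n) (Fin n) ℝ) - A1).det →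
      IsUnit (x • (1 : Matrix (Fin n) (Fin n) ℝ) - A2).det →
      coronal A1 μ1 x = coronal A2 μ2 x)
    (m : ℕ) (B : Matrix (Fin m) (Fin m) ℝ) (hBsym : B.IsSymm) (hBdiag : ∀ i, B i i = 0)
    (hBent : ∀ i j, B i j = 1 ∨ B i j = 0 ∨ B i j = -1)
    (ν : Fin m → ℝ) (hν : ∀ i, ν i = 1 ∨ ν i = -1) :
    (coronaStar (Matrix.diagonal ν * B.map abs * Matrix.diagonal ν) A1 ν μ1).charpoly
      = (coronaStar (Matrix.diagonal ν * B.map abs * Matrix.diagonal ν) A2 ν μ2).charpoly := by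
  have hν2 : ∀ i, ν i * ν i = 1 := fun i => by rcases hν i with h | h <;> rw [h] <;> norm_num
  set Bμ := Matrix.diagonal ν * B.map abs * Matrix.diagonal ν with hBμ
  apply Polynomial.eq_of_infinite_eval_eq
  have h1 : A1.charpoly ≠ 0 := A1.charpoly_monic.ne_zero
  have h2 : A2.charpoly ≠ 0 := A2.charpoly_monic.ne_zero
  have hfin : ({x : ℝ | A1.charpoly.IsRoot x} ∪ {x : ℝ | A2.charpoly.IsRoot x}).Finite :=
    (Polynomial.finite_setOf_isRoot h1).union (Polynomial.finite_setOf_isRoot h2)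
  refine Set.Infinite.mono ?_ hfin.infinite_compl
  intro x hx
  simp only [Set.mem_compl_iff, Set.mem_union, Set.mem_setOf_eq, not_or] at hx
  have hU1 : IsUnit (x • (1 : Matrix (Fin n) (Fin n) ℝ) - A1).det := by
    rw [← eval_charpoly']
    exact isUnit_iff_ne_zero.2 hx.1
  have hU2 : IsUnit (x • (1 : Matrix (Fin n) (Fin n) ℝ) - A2).det := by
    rw [← eval_charpoly']
    exact isUnit_iff_ne_zero.2 hx.2
  show _ = _
  rw [eval_charpoly', eval_charpoly', det_coronaStar A1 μ1 Bμ ν hν2 x hU1,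
    det_coronaStar A2 μ2 Bμ ν hν2 x hU2,
    show (x • (1 : Matrix (Fin n) (Fin n) ℝ) - A1).det = (x • 1 - A2).det by
      rw [← eval_charpoly', ← eval_charpoly', hcospec],
    hcoronal x hU1 hU2]
end

section
/- Let Γ1 be an r1-regular signed graph on n1 vertices with adjacency matrix A1 and marking μ1, and Γ2 any signed graph on n2 vertices with adjacency matrix A2 and marking μ2. Then for every real x such that (x−1)·I_{n2} − L(Γ2) is invertible, det(x·I − L(Γ1⊛Γ2)) = det((x−1)·I_{n2} − L(Γ2))^{n1} · det( (x − r1)·(x − r1 − n2 − χ_{L(Γ2)}(x−1))·I_{n1} − A_{1μ}² ). Equivalently, the Laplacian characteristic polynomial of Γ1⊛Γ2 equals ∏_{i=1}^{n2}(x − 1 − γ_{2i})^{n1} · ∏_{i=1}^{n1}( (x − r1 − n2 − χ_{L(Γ2)}(x−1))(x − r1) − (λ'_{1i})² ), where γ_{2i} are the eigenvalues of L(Γ2) and λ'_{1i} the eigenvalues of A_{1μ}. -/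
open Matrix Kronecker BigOperators

/-- The degree matrix of a signed graph: the diagonal matrix of the row sums of the
entrywise absolute value of its adjacency matrix. -/
noncomputable def degMat {V : Type} [Fintype V] [DecidableEq V] (M : Matrix V V ℝ) :
    Matrix V V ℝ :=
  Matrix.diagonal fun i => ∑ j, |M i j|

open Polynomial in
lemma det_fromBlocks_smul_one {n : Type} [Fintype n] [DecidableEq n]
    (A B C : Matrix n n ℝ) (c : ℝ) :
    (Matrix.fromBlocks A B C (c • (1 : Matrix n n ℝ))).det = (c • A - B * C).det := by
  have key : ∀ t : ℝ, t ≠ 0 →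
      (Matrix.fromBlocks A B C (t • (1 : Matrix n n ℝ))).det = (t • A - B * C).det := by
    intro t ht
    have h1 : (t⁻¹ • (1 : Matrix n n ℝ)) * (t • (1 : Matrix n n ℝ)) = 1 := by
      rw [Matrix.smul_mul, Matrix.mul_smul, one_mul, smul_smul, inv_mul_cancel₀ ht, one_smul]
    have h2 : (t • (1 : Matrix n n ℝ)) * (t⁻¹ • (1 : Matrix n n ℝ)) = 1 := by
      rw [Matrix.smul_mul, Matrix.mul_smul, one_mul, smul_smul, mul_inv_cancel₀ ht, one_smul]
    letI : Invertible (t • (1 : Matrix n n ℝ)) := ⟨t⁻¹ • 1, h1, h2⟩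
    rw [Matrix.det_fromBlocks₂₂]
    have hInv : ⅟(t • (1 : Matrix n n ℝ)) = t⁻¹ • (1 : Matrix n n ℝ) := rfl
    rw [hInv]
    have h3 : A - B * (t⁻¹ • (1 : Matrix n n ℝ)) * C = A - t⁻¹ • (B * C) := by
      rw [Matrix.mul_smul, Matrix.mul_one, Matrix.smul_mul]
    have h4 : t • A - B * C = t • (A - t⁻¹ • (B * C)) := by
      rw [smul_sub, smul_smul, mul_inv_cancel₀ ht, one_smul]
    rw [h3, h4, Matrix.det_smul, Matrix.det_smul, Matrix.det_one, mul_one]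
  set P : ℝ[X] := (Matrix.fromBlocks (A.map Polynomial.C) (B.map Polynomial.C)
      (C.map Polynomial.C) ((X : ℝ[X]) • (1 : Matrix n n ℝ[X]))).det with hP
  set Q : ℝ[X] := ((X : ℝ[X]) • (A.map Polynomial.C)
      - (B.map Polynomial.C) * (C.map Polynomial.C)).det with hQ
  have hevalP : ∀ t : ℝ, P.eval t = (Matrix.fromBlocks A B C (t • (1 : Matrix n n ℝ))).det := by
    intro t
    have := RingHom.map_det (evalRingHom t)
      (Matrix.fromBlocks (A.map Polynomial.C) (B.map Polynomial.C)
        (C.map Polynomial.C) ((X : ℝ[X]) • (1 : Matrix n n ℝ[X])))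
    rw [hP]
    show (evalRingHom t) _ = _
    rw [this]
    congr 1
    ext i j
    rcases i with i | i <;> rcases j with j | j <;>
      simp [Matrix.one_apply, apply_ite (eval t)]
  have hevalQ : ∀ t : ℝ, Q.eval t = (t • A - B * C).det := by
    intro t
    have := RingHom.map_det (evalRingHom t)
      ((X : ℝ[X]) • (A.map Polynomial.C) - (B.map Polynomial.C) * (C.map Polynomial.C))
    rw [hQ]
    show (evalRingHom t) _ = _
    rw [this]
    congr 1
    ext i j
    simp [Matrix.mul_apply, Matrix.sub_apply, eval_finset_sum]
    ring
  have hPQ : P = Q := by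
    apply Polynomial.eq_of_infinite_eval_eq
    apply Set.Infinite.mono (s := {(0:ℝ)}ᶜ)
    · intro t ht
      simp only [Set.mem_compl_iff, Set.mem_singleton_iff] at ht
      show P.eval t = Q.eval t
      rw [hevalP, hevalQ, key t ht]
    · exact (Set.finite_singleton 0).infinite_compl
  rw [← hevalP c, hPQ, hevalQ]

/-- For `Γ₁` an `r₁`-regular signed graph on `n₁` vertices and `Γ₂` arbitrary
on `n₂` vertices, for every real `x` with `(x−1)·I − L(Γ₂)` invertible,
`det(x·I − L(Γ₁⊛Γ₂)) = det((x−1)·I − L(Γ₂))^{n₁} · det((x−r₁)(x−r₁−n₂−χ_{L(Γ₂)}(x−1))·I_{n₁} − A₁μ²)`. -/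
theorem corona_laplacian_charpoly (n1 n2 : ℕ) (r1 : ℝ)
    (A1 : Matrix (Fin n1) (Fin n1) ℝ) (hA1sym : A1.IsSymm) (hA1diag : ∀ i, A1 i i = 0)
    (hA1ent : ∀ i j, A1 i j = 1 ∨ A1 i j = 0 ∨ A1 i j = -1)
    (μ1 : Fin n1 → ℝ) (hμ1 : ∀ i, μ1 i = 1 ∨ μ1 i = -1)
    (hreg : ∀ i, ∑ j, |A1 i j| = r1)
    (A2 : Matrix (Fin n2) (Fin n2) ℝ) (hA2sym : A2.IsSymm) (hA2diag : ∀ i, A2 i i = 0)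
    (hA2ent : ∀ i j, A2 i j = 1 ∨ A2 i j = 0 ∨ A2 i j = -1)
    (μ2 : Fin n2 → ℝ) (hμ2 : ∀ i, μ2 i = 1 ∨ μ2 i = -1)
    (x : ℝ)
    (hx : IsUnit ((x - 1) • (1 : Matrix (Fin n2) (Fin n2) ℝ) - (degMat A2 - A2)).det) :
    (x • 1 -
        (degMat (coronaStar (Matrix.diagonal μ1 * A1.map abs * Matrix.diagonal μ1) A2 μ1 μ2)
          - coronaStar (Matrix.diagonal μ1 * A1.map abs * Matrix.diagonal μ1) A2 μ1 μ2)).det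
      = ((x - 1) • (1 : Matrix (Fin n2) (Fin n2) ℝ) - (degMat A2 - A2)).det ^ n1 *
        (((x - r1) * (x - r1 - (n2 : ℝ) - coronal (degMat A2 - A2) μ2 (x - 1))) •
            (1 : Matrix (Fin n1) (Fin n1) ℝ)
          - (Matrix.diagonal μ1 * A1.map abs * Matrix.diagonal μ1) ^ 2).det := by
  have hμ1abs : ∀ i, |μ1 i| = 1 := fun i => by rcases hμ1 i with h | h <;> simp [h]
  have hμ1sq : ∀ i, μ1 i * μ1 i = 1 := fun i => by rcases hμ1 i with h | h <;> simp [h]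
  have hμ2abs : ∀ i, |μ2 i| = 1 := fun i => by rcases hμ2 i with h | h <;> simp [h]
  set A1μ := Matrix.diagonal μ1 * A1.map abs * Matrix.diagonal μ1 with hA1μdef
  have hA1μ_apply : ∀ a b, A1μ a b = μ1 a * |A1 a b| * μ1 b := by
    intro a b
    rw [hA1μdef, Matrix.mul_diagonal, Matrix.diagonal_mul, Matrix.map_apply]
  have hA1μabs : ∀ a b, |A1μ a b| = |A1 a b| := by
    intro a b
    rw [hA1μ_apply, abs_mul, abs_mul, hμ1abs, hμ1abs, abs_abs, one_mul, mul_one]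
  set L2 := degMat A2 - A2 with hL2def
  set S := (x - 1) • (1 : Matrix (Fin n2) (Fin n2) ℝ) - L2 with hSdef
  set χ := coronal L2 μ2 (x - 1) with hχdef
  have hχS : χ = μ2 ⬝ᵥ (S⁻¹ *ᵥ μ2) := by rw [hχdef, coronal, ← hSdef]
  -- the degree matrix
  have hdeg : degMat (coronaStar A1μ A2 μ1 μ2)
      = Matrix.diagonal (Sum.elim (Sum.elim (fun _ : Fin n1 => r1) (fun _ : Fin n1 => r1 + n2))
          (fun p : Fin n2 × Fin n1 => (∑ j, |A2 p.1 j|) + 1)) := by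
    unfold degMat
    refine congrArg Matrix.diagonal (funext fun i => ?_)
    have habs1 : ∀ (a : Fin n1) (j : Fin n2), (∑ k, |μ2 j * Matrix.diagonal μ1 a k|) = 1 := by
      intro a j
      have : ∀ k, |μ2 j * Matrix.diagonal μ1 a k| = if a = k then 1 else 0 := by
        intro k
        rw [Matrix.diagonal_apply]
        split_ifs with h
        · rw [abs_mul, hμ2abs, hμ1abs, one_mul]
        · simp
      simp [this]
    rcases i with (a | a) | ⟨j, k⟩
    · simp only [coronaStar, Fintype.sum_sum_type, Matrix.fromBlocks_apply₁₁,
        Matrix.fromBlocks_apply₁₂, Matrix.fromRows_apply_inl, Matrix.zero_apply, abs_zero,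
        Finset.sum_const_zero, add_zero, zero_add, Sum.elim_inl]
      rw [Finset.sum_congr rfl fun b _ => hA1μabs a b]
      exact hreg a
    · simp only [coronaStar, Fintype.sum_sum_type, Fintype.sum_prod_type,
        Matrix.fromBlocks_apply₁₁, Matrix.fromBlocks_apply₁₂, Matrix.fromBlocks_apply₂₁,
        Matrix.fromBlocks_apply₂₂, Matrix.fromRows_apply_inr, Sum.elim_inr, Sum.elim_inl,
        Matrix.zero_apply, abs_zero, Finset.sum_const_zero, zero_add, add_zero,
        muBlock, Matrix.of_apply]
      rw [Finset.sum_congr rfl fun b _ => hA1μabs a b, hreg a]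
      rw [Finset.sum_congr rfl fun j _ => habs1 a j]
      simp
    · have h1 : ∀ b, |muBlock μ1 μ2 b (j, k)| = if b = k then 1 else 0 := by
        intro b
        rw [muBlock, Matrix.of_apply, Matrix.diagonal_apply]
        split_ifs with h
        · rw [abs_mul, hμ2abs, hμ1abs, one_mul]
        · simp
      have h2 : ∀ (j' : Fin n2) (k' : Fin n1),
          |A2 j j' * (1 : Matrix (Fin n1) (Fin n1) ℝ) k k'| = if k = k' then |A2 j j'| else 0 := by
        intro j' k'
        rw [Matrix.one_apply]
        split_ifs with h
        · rw [mul_one]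
        · simp
      simp only [coronaStar, Fintype.sum_sum_type, Fintype.sum_prod_type,
        Matrix.fromBlocks_apply₂₁, Matrix.fromBlocks_apply₂₂,
        Matrix.fromCols_apply_inl, Matrix.fromCols_apply_inr, Matrix.zero_apply, abs_zero,
        Finset.sum_const_zero, zero_add, add_zero, Sum.elim_inr, Matrix.transpose_apply,
        kroneckerMap_apply]
      rw [Finset.sum_congr rfl fun b _ => h1 b]
      rw [Finset.sum_congr rfl fun j' _ => Finset.sum_congr rfl fun k' _ => h2 j' k']
      simp [Finset.sum_ite_eq, Finset.sum_ite_eq', add_comm]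
  -- block form of x I - L
  have hM : x • (1 : Matrix ((Fin n1 ⊕ Fin n1) ⊕ Fin n2 × Fin n1)
        ((Fin n1 ⊕ Fin n1) ⊕ Fin n2 × Fin n1) ℝ)
      - (degMat (coronaStar A1μ A2 μ1 μ2) - coronaStar A1μ A2 μ1 μ2)
      = Matrix.fromBlocks
          (Matrix.fromBlocks ((x - r1) • 1) A1μ A1μ ((x - r1 - n2) • 1))
          (Matrix.fromRows 0 (muBlock μ1 μ2))
          (Matrix.fromCols 0 (muBlock μ1 μ2)ᵀ)
          (S ⊗ₖ (1 : Matrix (Fin n1) (Fin n1) ℝ)) := by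
    rw [hdeg]
    ext i z
    rcases i with (a | a) | ⟨j, k⟩ <;> rcases z with (b | b) | ⟨j', k'⟩ <;>
      simp only [coronaStar, Matrix.sub_apply, Matrix.smul_apply, Matrix.one_apply,
        Matrix.diagonal_apply, Matrix.fromBlocks_apply₁₁, Matrix.fromBlocks_apply₁₂,
        Matrix.fromBlocks_apply₂₁, Matrix.fromBlocks_apply₂₂, Matrix.fromRows_apply_inl,
        Matrix.fromRows_apply_inr, Matrix.fromCols_apply_inl, Matrix.fromCols_apply_inr,
        Matrix.zero_apply, Sum.elim_inl, Sum.elim_inr, Sum.inl.injEq, Sum.inr.injEq,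
        kroneckerMap_apply, hSdef, hL2def, degMat, smul_eq_mul, Prod.mk.injEq, reduceCtorEq,
        if_false, and_true, true_and, and_false, false_and]
    all_goals try ring
    all_goals try (split_ifs <;> try ring)
    all_goals (exfalso; simp_all)
  rw [hM]
  have hDunit : IsUnit ((S ⊗ₖ (1 : Matrix (Fin n1) (Fin n1) ℝ))).det := by
    rw [Matrix.det_kronecker, Matrix.det_one, one_pow, mul_one]
    exact hx.pow _
  haveI := (S ⊗ₖ (1 : Matrix (Fin n1) (Fin n1) ℝ)).invertibleOfIsUnitDet hDunit
  rw [Matrix.det_fromBlocks₂₂, Matrix.invOf_eq_nonsing_inv, Matrix.inv_kronecker, inv_one]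
  have key : muBlock μ1 μ2 * (S⁻¹ ⊗ₖ (1 : Matrix (Fin n1) (Fin n1) ℝ)) * (muBlock μ1 μ2)ᵀ
      = χ • (1 : Matrix (Fin n1) (Fin n1) ℝ) := by
    have hentry : ∀ (i : Fin n1) (j' : Fin n2) (k' : Fin n1),
        (muBlock μ1 μ2 * (S⁻¹ ⊗ₖ (1 : Matrix (Fin n1) (Fin n1) ℝ))) i (j', k')
          = (∑ j, μ2 j * S⁻¹ j j') * μ1 i * (if i = k' then 1 else 0) := by
      intro i j' k'
      rw [Matrix.mul_apply, Fintype.sum_prod_type]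
      have hin : ∀ j : Fin n2,
          (∑ k, muBlock μ1 μ2 i (j, k)
              * (S⁻¹ ⊗ₖ (1 : Matrix (Fin n1) (Fin n1) ℝ)) (j, k) (j', k'))
            = μ2 j * S⁻¹ j j' * μ1 i * (if i = k' then 1 else 0) := by
        intro j
        rw [Finset.sum_eq_single i]
        · simp only [muBlock, Matrix.of_apply, Matrix.diagonal_apply_eq, kroneckerMap_apply,
            Matrix.one_apply]
          split_ifs <;> ring
        · intro k _ hk
          simp [muBlock, Matrix.diagonal_apply, Ne.symm hk]
        · intro h
          exact absurd (Finset.mem_univ i) h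
      rw [Finset.sum_congr rfl fun j _ => hin j, ← Finset.sum_mul, ← Finset.sum_mul]
    ext i i'
    rw [Matrix.mul_apply, Fintype.sum_prod_type]
    have hout : ∀ j' : Fin n2,
        (∑ k', (muBlock μ1 μ2 * (S⁻¹ ⊗ₖ (1 : Matrix (Fin n1) (Fin n1) ℝ))) i (j', k')
            * (muBlock μ1 μ2)ᵀ (j', k') i')
          = (∑ j, μ2 j * S⁻¹ j j') * μ1 i * (if i = i' then 1 else 0) * (μ2 j' * μ1 i') := by
      intro j'
      rw [Finset.sum_eq_single i']
      · rw [hentry]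
        simp [muBlock, Matrix.diagonal_apply_eq]
      · intro k' _ hk
        simp [muBlock, Matrix.diagonal_apply, Ne.symm hk]
      · intro h
        exact absurd (Finset.mem_univ i') h
    rw [Finset.sum_congr rfl fun j' _ => hout j']
    rw [Matrix.smul_apply, Matrix.one_apply, smul_eq_mul]
    rcases eq_or_ne i i' with rfl | hne
    · simp only [if_true, mul_one, if_pos rfl]
      rw [hχS]
      simp only [dotProduct, Matrix.mulVec, dotProduct, Finset.mul_sum, Finset.sum_mul]
      rw [Finset.sum_comm]
      refine Finset.sum_congr rfl fun j' _ => Finset.sum_congr rfl fun j _ => ?_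
      linear_combination (μ2 j' * S⁻¹ j' j * μ2 j) * hμ1sq i
    · simp [hne]
  rw [Matrix.fromRows_mul, Matrix.zero_mul, Matrix.fromRows_mul_fromCols,
    Matrix.zero_mul, Matrix.mul_zero, key]
  have hPsub : Matrix.fromBlocks ((x - r1) • 1) A1μ A1μ ((x - r1 - (n2:ℝ)) • 1)
      - Matrix.fromBlocks 0 ((0 : Matrix (Fin n1) (Fin n2 × Fin n1) ℝ) * (muBlock μ1 μ2)ᵀ) 0 (χ • (1 : Matrix (Fin n1) (Fin n1) ℝ))
      = Matrix.fromBlocks ((x - r1) • 1) A1μ A1μ ((x - r1 - (n2:ℝ) - χ) • 1) := by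
    ext i z
    rcases i with a | a <;> rcases z with b | b <;>
      simp [Matrix.one_apply, mul_ite] <;> split_ifs <;> ring
  rw [hPsub, det_fromBlocks_smul_one, Matrix.det_kronecker, Matrix.det_one, one_pow, mul_one,
    Fintype.card_fin]
  congr 1
  rw [smul_smul, mul_comm, pow_two]
end

section
/- Let Γ1 and Γ2 be r-regular signed graphs of the same order n with adjacency matrices A1, A2 and markings μ1, μ2 such that the μ-signed adjacency matrices Φ1·|A1|·Φ1 and Φ2·|A2|·Φ2 have the same characteristic polynomial. Then for every signed graph Γ (with marking), the Laplacian matrices L(Γ1⊛Γ) and L(Γ2⊛Γ) have the same characteristic polynomial, i.e., Γ1⊛Γ and Γ2⊛Γ are Laplacian cospectral. -/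
open Matrix Kronecker BigOperators

open Matrix Kronecker BigOperators Polynomial

set_option linter.unusedSectionVars false
namespace Aux14

variable {V : Type*} [Fintype V] [DecidableEq V]

lemma charpoly_conj (P Q A : Matrix V V ℝ) (hPQ : P * Q = 1) :
    (P * A * Q).charpoly = A.charpoly := by
  have hone : Matrix.scalar V (X : ℝ[X]) = (X : ℝ[X]) • (1 : Matrix V V ℝ[X]) := by
    ext i j
    by_cases h : i = j <;> simp [h, Matrix.scalar_apply, Matrix.one_apply]
  have hmapmul : ∀ (M N : Matrix V V ℝ), (M * N).map (C : ℝ → ℝ[X]) = M.map C * N.map C := by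
    intro M N
    exact Matrix.map_mul (f := (C : ℝ →+* ℝ[X]))
  have hmapone : (1 : Matrix V V ℝ).map (C : ℝ → ℝ[X]) = 1 := by
    exact Matrix.map_one _ (map_zero C) (map_one C)
  have hc : charmatrix (P * A * Q) = P.map C * charmatrix A * Q.map C := by
    unfold charmatrix
    rw [RingHom.mapMatrix_apply, RingHom.mapMatrix_apply, hmapmul, hmapmul, hone]
    rw [Matrix.mul_sub, Matrix.sub_mul]
    congr 1
    rw [mul_smul_comm, smul_mul_assoc, Matrix.mul_one, ← hmapmul, hPQ, hmapone]
  have hdet1 : (P.map (C : ℝ → ℝ[X])).det * (Q.map C).det = 1 := by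
    rw [← Matrix.det_mul, ← hmapmul, hPQ, hmapone, Matrix.det_one]
  unfold Matrix.charpoly
  rw [hc, Matrix.det_mul, Matrix.det_mul]
  calc (P.map C).det * (charmatrix A).det * (Q.map C).det
      = ((P.map C).det * (Q.map C).det) * (charmatrix A).det := by ring
    _ = (charmatrix A).det := by rw [hdet1, one_mul]

/-- two-sided explicit similarity -/
def Sim (A B : Matrix V V ℝ) : Prop :=
  ∃ P Q : Matrix V V ℝ, P * Q = 1 ∧ Q * P = 1 ∧ B = P * A * Q

lemma Sim.charpoly_eq {A B : Matrix V V ℝ} (h : Sim A B) : B.charpoly = A.charpoly := by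
  obtain ⟨P, Q, hPQ, hQP, rfl⟩ := h
  exact charpoly_conj P Q A hPQ

lemma Sim.trans {A B C : Matrix V V ℝ} (h1 : Sim A B) (h2 : Sim B C) : Sim A C := by
  obtain ⟨P, Q, hPQ, hQP, rfl⟩ := h1
  obtain ⟨R, S, hRS, hSR, rfl⟩ := h2
  refine ⟨R * P, Q * S, ?_, ?_, by noncomm_ring⟩
  · rw [mul_assoc, ← mul_assoc P, hPQ, one_mul, hRS]
  · rw [mul_assoc, ← mul_assoc S, hSR, one_mul, hQP]

lemma Sim.symm {A B : Matrix V V ℝ} (h : Sim A B) : Sim B A := by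
  obtain ⟨P, Q, hPQ, hQP, rfl⟩ := h
  refine ⟨Q, P, hQP, hPQ, ?_⟩
  have h : Q * (P * A * Q) * P = Q * P * A * (Q * P) := by noncomm_ring
  rw [h, hQP, one_mul, mul_one]

lemma sim_diagonal_of_isHermitian (A : Matrix V V ℝ) (hA : A.IsHermitian) :
    Sim A (Matrix.diagonal hA.eigenvalues) := by
  refine ⟨star (hA.eigenvectorUnitary : Matrix V V ℝ), (hA.eigenvectorUnitary : Matrix V V ℝ),
    ?_, ?_, ?_⟩
  · exact Unitary.star_mul_self_of_mem (hA.eigenvectorUnitary).2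
  · exact Unitary.mul_star_self_of_mem (hA.eigenvectorUnitary).2
  · have := hA.conjStarAlgAut_star_eigenvectorUnitary
    rw [Unitary.conjStarAlgAut_star_apply] at this
    rw [this]
    congr 1

lemma charpoly_diagonal (d : V → ℝ) :
    (Matrix.diagonal d).charpoly = ∏ i, (X - C (d i)) := by
  unfold Matrix.charpoly
  have : charmatrix (Matrix.diagonal d) = Matrix.diagonal fun i => (X : ℝ[X]) - C (d i) := by
    ext i j
    by_cases h : i = j
    · subst h; simp
    · simp [h, Matrix.diagonal_apply_ne _ h]
  rw [this, Matrix.det_diagonal]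

lemma multiset_eq_of_prod_eq (f g : V → ℝ)
    (h : ∏ i, ((X : ℝ[X]) - C (f i)) = ∏ i, ((X : ℝ[X]) - C (g i))) :
    Multiset.map f Finset.univ.val = Multiset.map g Finset.univ.val := by
  have key : ∀ u : V → ℝ, (∏ i, ((X : ℝ[X]) - C (u i))).roots = Multiset.map u Finset.univ.val := by
    intro u
    rw [Finset.prod_eq_multiset_prod]
    rw [show Multiset.map (fun i => (X : ℝ[X]) - C (u i)) Finset.univ.val
        = Multiset.map (fun a => (X : ℝ[X]) - C a) (Multiset.map u Finset.univ.val) by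
      rw [Multiset.map_map]; rfl]
    exact roots_multiset_prod_X_sub_C _
  have := congrArg Polynomial.roots h
  rwa [key, key] at this

lemma exists_comp_perm_eq (f g : V → ℝ)
    (h : Multiset.map f Finset.univ.val = Multiset.map g Finset.univ.val) :
    ∃ σ : Equiv.Perm V, f ∘ σ = g := by
  classical
  have hcount : ∀ u : V → ℝ, ∀ c : ℝ,
      Fintype.card {a // u a = c} = Multiset.count c (Multiset.map u Finset.univ.val) := by
    intro u c
    rw [Multiset.count_map, Fintype.card_subtype, Finset.card, Finset.filter_val]
    congr 1
    apply Multiset.filter_congr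
    intro x _
    exact ⟨fun h' => h'.symm, fun h' => h'.symm⟩
  have hcard : ∀ c : ℝ, Fintype.card {a // g a = c} = Fintype.card {a // f a = c} := by
    intro c
    rw [hcount, hcount, h]
  refine ⟨Equiv.ofFiberEquiv (f := g) (g := f) (fun c => Fintype.equivOfCardEq (hcard c)), ?_⟩
  funext a
  exact Equiv.ofFiberEquiv_map _ a

lemma sim_diagonal_perm (d : V → ℝ) (σ : Equiv.Perm V) :
    Sim (Matrix.diagonal d) (Matrix.diagonal (d ∘ σ)) := by
  classical
  refine ⟨(σ.toPEquiv.toMatrix : Matrix V V ℝ), (σ.symm.toPEquiv.toMatrix : Matrix V V ℝ),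
    ?_, ?_, ?_⟩
  · rw [← PEquiv.toMatrix_trans, ← Equiv.toPEquiv_trans, Equiv.self_trans_symm,
      Equiv.toPEquiv_refl, PEquiv.toMatrix_refl]
  · rw [← PEquiv.toMatrix_trans, ← Equiv.toPEquiv_trans, Equiv.symm_trans_self,
      Equiv.toPEquiv_refl, PEquiv.toMatrix_refl]
  · rw [PEquiv.toMatrix_toPEquiv_mul, PEquiv.mul_toMatrix_toPEquiv, Equiv.symm_symm,
      Matrix.submatrix_submatrix]
    ext i j
    by_cases h : i = j
    · subst h; simp
    · have : σ i ≠ σ j := fun hc => h (σ.injective hc)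
      simp [Matrix.submatrix_apply, Matrix.diagonal_apply_ne _ h, Matrix.diagonal_apply_ne _ this, Function.comp]

end Aux14

namespace Aux14b
open Aux14 Polynomial
variable {V : Type*} [Fintype V] [DecidableEq V]

lemma isHermitian_of_isSymm {A : Matrix V V ℝ} (hA : A.IsSymm) : A.IsHermitian := by
  unfold Matrix.IsHermitian
  rw [show A.conjTranspose = A.transpose from rfl]
  exact hA

lemma sim_of_isSymm_charpoly_eq (A B : Matrix V V ℝ) (hA : A.IsSymm) (hB : B.IsSymm)
    (h : A.charpoly = B.charpoly) : Sim A B := by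
  have hA' := isHermitian_of_isSymm hA
  have hB' := isHermitian_of_isSymm hB
  have s1 := sim_diagonal_of_isHermitian A hA'
  have s2 := sim_diagonal_of_isHermitian B hB'
  have hchar : (Matrix.diagonal hA'.eigenvalues).charpoly
      = (Matrix.diagonal hB'.eigenvalues).charpoly := by
    rw [s1.charpoly_eq, s2.charpoly_eq, h]
  rw [Aux14.charpoly_diagonal, Aux14.charpoly_diagonal] at hchar
  obtain ⟨σ, hσ⟩ := exists_comp_perm_eq _ _ (multiset_eq_of_prod_eq _ _ hchar)
  have s3 : Sim (Matrix.diagonal hA'.eigenvalues) (Matrix.diagonal hB'.eigenvalues) := by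
    have := sim_diagonal_perm hA'.eigenvalues σ
    rwa [hσ] at this
  exact (s1.trans s3).trans s2.symm

end Aux14b


open Matrix Kronecker BigOperators

namespace Aux14c

variable {n m : ℕ}

lemma mul_muGen (W : Matrix (Fin n) (Fin n) ℝ) (ν : Fin m → ℝ) (N : Matrix (Fin n) (Fin n) ℝ) :
    W * Matrix.of (fun i (jk : Fin m × Fin n) => ν jk.1 * N i jk.2)
      = Matrix.of (fun i (jk : Fin m × Fin n) => ν jk.1 * (W * N) i jk.2) := by
  ext i jk
  simp only [Matrix.mul_apply, Matrix.of_apply]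
  rw [Finset.mul_sum]
  apply Finset.sum_congr rfl
  intro x _
  ring

lemma muGen_mul (ν : Fin m → ℝ) (N M : Matrix (Fin n) (Fin n) ℝ) :
    Matrix.of (fun i (jk : Fin m × Fin n) => ν jk.1 * N i jk.2)
        * ((1 : Matrix (Fin m) (Fin m) ℝ) ⊗ₖ M)
      = Matrix.of (fun i (jk : Fin m × Fin n) => ν jk.1 * (N * M) i jk.2) := by
  ext i jk
  obtain ⟨j, k⟩ := jk
  simp only [Matrix.mul_apply, Matrix.of_apply, Matrix.kroneckerMap_apply,
    Fintype.sum_prod_type, Matrix.one_apply]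
  simp only [ite_mul, one_mul, zero_mul, mul_ite, mul_zero, Finset.sum_ite_irrel,
    Finset.sum_const_zero, Finset.sum_ite_eq, Finset.sum_ite_eq', Finset.mem_univ, if_true]
  rw [Finset.mul_sum]
  apply Finset.sum_congr rfl
  intro x _
  ring

lemma key1 (W Y : Matrix (Fin n) (Fin n) ℝ) (μ μ' : Fin n → ℝ) (ν : Fin m → ℝ)
    (h : W * Matrix.diagonal μ * Y = Matrix.diagonal μ') :
    W * muBlock μ ν * ((1 : Matrix (Fin m) (Fin m) ℝ) ⊗ₖ Y) = muBlock μ' ν := by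
  have h0 : muBlock μ ν
      = Matrix.of (fun i (jk : Fin m × Fin n) => ν jk.1 * (Matrix.diagonal μ) i jk.2) := rfl
  rw [h0, mul_muGen, muGen_mul]
  simp only [h]
  rfl

lemma key2 (Vm W' : Matrix (Fin n) (Fin n) ℝ) (μ μ' : Fin n → ℝ) (ν : Fin m → ℝ)
    (h : Vm * Matrix.diagonal μ * W' = Matrix.diagonal μ') :
    ((1 : Matrix (Fin m) (Fin m) ℝ) ⊗ₖ Vm) * (muBlock μ ν)ᵀ * W' = (muBlock μ' ν)ᵀ := by
  have h' : W'ᵀ * Matrix.diagonal μ * Vmᵀ = Matrix.diagonal μ' := by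
    have := congrArg Matrix.transpose h
    rw [Matrix.transpose_mul, Matrix.transpose_mul, Matrix.diagonal_transpose] at this
    rw [← Matrix.mul_assoc] at this
    rwa [Matrix.diagonal_transpose] at this
  have := congrArg Matrix.transpose (key1 W'ᵀ Vmᵀ μ μ' ν h')
  rw [Matrix.transpose_mul, Matrix.transpose_mul, Matrix.transpose_transpose] at this
  rw [← Matrix.kroneckerMap_transpose, Matrix.transpose_one] at this
  rw [← Matrix.mul_assoc] at this
  rwa [Matrix.transpose_transpose] at this

end Aux14c

namespace Aux14d

open Aux14c

variable {n m : ℕ}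

lemma degMat_corona (r : ℝ) (A : Matrix (Fin n) (Fin n) ℝ) (B : Matrix (Fin m) (Fin m) ℝ)
    (μ : Fin n → ℝ) (ν : Fin m → ℝ)
    (hrow : ∀ i, ∑ j, |A i j| = r) (hμ : ∀ i, |μ i| = 1) (hν : ∀ j, |ν j| = 1) :
    degMat (coronaStar A B μ ν) = Matrix.diagonal (Sum.elim
      (Sum.elim (fun _ : Fin n => r) (fun _ : Fin n => r + m))
      (fun jk : Fin m × Fin n => 1 + ∑ j', |B jk.1 j'|)) := by
  unfold degMat
  apply congrArg
  funext x
  have habsdiag : ∀ (w : Fin n → ℝ) (i k : Fin n), |Matrix.diagonal w i k|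
      = if i = k then |w i| else 0 := by
    intro w i k
    by_cases h : i = k
    · subst h; simp
    · simp [Matrix.diagonal_apply_ne _ h, h]
  rcases x with (i | i) | ⟨j, i⟩
  · simp only [Sum.elim_inl, coronaStar, Fintype.sum_sum_type, Fintype.sum_prod_type,
      Matrix.fromBlocks_apply₁₁, Matrix.fromBlocks_apply₁₂, Matrix.fromBlocks_apply₂₁,
      Matrix.fromRows_apply_inl, Matrix.zero_apply, abs_zero, Finset.sum_const_zero,
      add_zero, zero_add]
    exact hrow i
  · simp only [Sum.elim_inl, Sum.elim_inr, coronaStar, Fintype.sum_sum_type, Fintype.sum_prod_type,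
      Matrix.fromBlocks_apply₁₁, Matrix.fromBlocks_apply₁₂, Matrix.fromBlocks_apply₂₁,
      Matrix.fromBlocks_apply₂₂, Matrix.fromRows_apply_inr, Matrix.zero_apply, abs_zero, Finset.sum_const_zero,
      add_zero, zero_add, muBlock, Matrix.of_apply]
    rw [hrow i]
    congr 1
    have : ∀ j' : Fin m, ∑ k, |ν j' * Matrix.diagonal μ i k| = 1 := by
      intro j'
      simp only [abs_mul, habsdiag, mul_ite, mul_zero, Finset.sum_ite_eq, Finset.mem_univ,
        if_true, hν, hμ, one_mul]
    simp only [this, Finset.sum_const, Finset.card_univ, Fintype.card_fin, nsmul_eq_mul, mul_one]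
  · simp only [Sum.elim_inr, coronaStar, Fintype.sum_sum_type, Fintype.sum_prod_type,
      Matrix.fromBlocks_apply₂₁, Matrix.fromBlocks_apply₂₂,
      Matrix.fromCols_apply_inl, Matrix.fromCols_apply_inr, Matrix.zero_apply, abs_zero,
      Finset.sum_const_zero, add_zero, zero_add, Matrix.transpose_apply, muBlock, Matrix.of_apply,
      Matrix.kroneckerMap_apply]
    have h1 : ∑ k, |ν j * Matrix.diagonal μ k i| = 1 := by
      have : ∀ k, |Matrix.diagonal μ k i| = if k = i then |μ i| else 0 := by
        intro k
        by_cases h : k = i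
        · subst h; simp
        · simp [Matrix.diagonal_apply_ne _ h, h]
      simp only [abs_mul, this, mul_ite, mul_zero, Finset.sum_ite_eq', Finset.mem_univ,
        if_true, hν, hμ, one_mul]
    have h2 : ∀ j' : Fin m, ∑ k, |B j j' * (1 : Matrix (Fin n) (Fin n) ℝ) i k| = |B j j'| := by
      intro j'
      have : ∀ k, |(1 : Matrix (Fin n) (Fin n) ℝ) i k| = if i = k then 1 else 0 := by
        intro k
        by_cases h : i = k
        · subst h; simp
        · simp [Matrix.one_apply_ne h, h]
      simp only [abs_mul, this, mul_ite, mul_zero, mul_one, Finset.sum_ite_eq, Finset.mem_univ,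
        if_true]
    rw [h1]
    simp only [h2]

end Aux14d

namespace Aux14e
open Aux14c Aux14d

variable {n m : ℕ}

lemma smul_one_diag (c : ℝ) :
    Matrix.diagonal (fun _ : Fin n => c) = c • (1 : Matrix (Fin n) (Fin n) ℝ) := by
  ext i j
  by_cases h : i = j
  · subst h; simp
  · simp [Matrix.diagonal_apply_ne _ h, Matrix.one_apply_ne h]

lemma conj_const_diag (c : ℝ) (W W' : Matrix (Fin n) (Fin n) ℝ) (hWW' : W * W' = 1) :
    W * Matrix.diagonal (fun _ : Fin n => c) * W' = Matrix.diagonal (fun _ : Fin n => c) := by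
  rw [smul_one_diag, mul_smul_comm, smul_mul_assoc, Matrix.mul_one, hWW']

lemma fromBlocks_conj {l o : Type*} [Fintype l] [Fintype o]
    (P P' : Matrix l l ℝ) (S S' : Matrix o o ℝ) (X : Matrix l l ℝ) (Y : Matrix l o ℝ)
    (Z : Matrix o l ℝ) (T : Matrix o o ℝ) :
    Matrix.fromBlocks P 0 0 S * Matrix.fromBlocks X Y Z T * Matrix.fromBlocks P' 0 0 S' =
      Matrix.fromBlocks (P * X * P') (P * Y * S') (S * Z * P') (S * T * S') := by
  rw [Matrix.fromBlocks_multiply, Matrix.fromBlocks_multiply]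
  simp only [Matrix.mul_zero, Matrix.zero_mul, add_zero, zero_add]

lemma corona_conj (A A' : Matrix (Fin n) (Fin n) ℝ) (μ μ' : Fin n → ℝ)
    (hsq : Matrix.diagonal μ * Matrix.diagonal μ = 1)
    (hsq' : Matrix.diagonal μ' * Matrix.diagonal μ' = 1)
    (W W' : Matrix (Fin n) (Fin n) ℝ) (hWW' : W * W' = 1) (hW'W : W' * W = 1)
    (hWAW' : W * A * W' = A')
    (B : Matrix (Fin m) (Fin m) ℝ) (ν : Fin m → ℝ) (e : Fin m → ℝ) :
    ∃ P Q : Matrix ((Fin n ⊕ Fin n) ⊕ Fin m × Fin n) ((Fin n ⊕ Fin n) ⊕ Fin m × Fin n) ℝ,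
      P * Q = 1 ∧ Q * P = 1 ∧
      P * coronaStar A B μ ν * Q = coronaStar A' B μ' ν ∧
      ∀ c₁ c₂ : ℝ, P * Matrix.diagonal (Sum.elim
          (Sum.elim (fun _ : Fin n => c₁) (fun _ : Fin n => c₂))
          (fun jk : Fin m × Fin n => e jk.1)) * Q
        = Matrix.diagonal (Sum.elim
          (Sum.elim (fun _ : Fin n => c₁) (fun _ : Fin n => c₂))
          (fun jk : Fin m × Fin n => e jk.1)) := by
  have hΦsq := hsq
  set Φ := Matrix.diagonal μ with hΦ
  set Φ' := Matrix.diagonal μ' with hΦ'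
  have hV1 : (Φ' * W * Φ) * (Φ * W' * Φ') = 1 := by
    have e1 : (Φ' * W * Φ) * (Φ * W' * Φ') = Φ' * W * (Φ * Φ) * W' * Φ' := by noncomm_ring
    rw [e1, hsq, Matrix.mul_one, Matrix.mul_assoc Φ' W W', hWW', Matrix.mul_one, hsq']
  have hV2 : (Φ * W' * Φ') * (Φ' * W * Φ) = 1 := by
    have e1 : (Φ * W' * Φ') * (Φ' * W * Φ) = Φ * W' * (Φ' * Φ') * W * Φ := by noncomm_ring
    rw [e1, hsq', Matrix.mul_one, Matrix.mul_assoc Φ W' W, hW'W, Matrix.mul_one, hsq]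
  have hWΦ : W * Φ * (Φ * W' * Φ') = Φ' := by
    have e1 : W * Φ * (Φ * W' * Φ') = W * (Φ * Φ) * W' * Φ' := by noncomm_ring
    rw [e1, hsq, Matrix.mul_one, hWW', Matrix.one_mul]
  have hVΦ : (Φ' * W * Φ) * Φ * W' = Φ' := by
    have e1 : (Φ' * W * Φ) * Φ * W' = Φ' * W * (Φ * Φ) * W' := by noncomm_ring
    rw [e1, hsq, Matrix.mul_one, Matrix.mul_assoc Φ' W W', hWW', Matrix.mul_one]
  refine ⟨Matrix.fromBlocks (Matrix.fromBlocks W 0 0 W) 0 0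
      ((1 : Matrix (Fin m) (Fin m) ℝ) ⊗ₖ (Φ' * W * Φ)),
    Matrix.fromBlocks (Matrix.fromBlocks W' 0 0 W') 0 0
      ((1 : Matrix (Fin m) (Fin m) ℝ) ⊗ₖ (Φ * W' * Φ')), ?_, ?_, ?_, ?_⟩
  · rw [Matrix.fromBlocks_multiply]
    simp only [Matrix.mul_zero, Matrix.zero_mul, add_zero, zero_add]
    rw [Matrix.fromBlocks_multiply]
    simp only [Matrix.mul_zero, Matrix.zero_mul, add_zero, zero_add, hWW',
      ← Matrix.mul_kronecker_mul, Matrix.one_mul, hV1, Matrix.one_kronecker_one,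
      Matrix.fromBlocks_one]
  · rw [Matrix.fromBlocks_multiply]
    simp only [Matrix.mul_zero, Matrix.zero_mul, add_zero, zero_add]
    rw [Matrix.fromBlocks_multiply]
    simp only [Matrix.mul_zero, Matrix.zero_mul, add_zero, zero_add, hW'W,
      ← Matrix.mul_kronecker_mul, Matrix.one_mul, hV2, Matrix.one_kronecker_one,
      Matrix.fromBlocks_one]
  · unfold coronaStar
    rw [fromBlocks_conj]
    have hb11 : Matrix.fromBlocks W 0 0 W * Matrix.fromBlocks 0 A A 0 *
        Matrix.fromBlocks W' 0 0 W' = Matrix.fromBlocks 0 A' A' 0 := by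
      rw [fromBlocks_conj]
      simp only [Matrix.mul_zero, Matrix.zero_mul, hWAW']
    have hb12 : Matrix.fromBlocks W 0 0 W *
        Matrix.fromRows (0 : Matrix (Fin n) (Fin m × Fin n) ℝ) (muBlock μ ν) *
        ((1 : Matrix (Fin m) (Fin m) ℝ) ⊗ₖ (Φ * W' * Φ'))
        = Matrix.fromRows 0 (muBlock μ' ν) := by
      rw [Matrix.fromBlocks_mul_fromRows, Matrix.fromRows_mul]
      simp only [Matrix.mul_zero, Matrix.zero_mul, add_zero, zero_add]
      rw [key1 W (Φ * W' * Φ') μ μ' ν hWΦ]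
    have hb21 : ((1 : Matrix (Fin m) (Fin m) ℝ) ⊗ₖ (Φ' * W * Φ)) *
        Matrix.fromCols (0 : Matrix (Fin m × Fin n) (Fin n) ℝ) (muBlock μ ν)ᵀ *
        Matrix.fromBlocks W' 0 0 W'
        = Matrix.fromCols 0 (muBlock μ' ν)ᵀ := by
      rw [Matrix.mul_fromCols, Matrix.fromCols_mul_fromBlocks]
      simp only [Matrix.mul_zero, Matrix.zero_mul, add_zero, zero_add]
      rw [key2 (Φ' * W * Φ) W' μ μ' ν hVΦ]
    have hb22 : ((1 : Matrix (Fin m) (Fin m) ℝ) ⊗ₖ (Φ' * W * Φ)) *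
        (B ⊗ₖ (1 : Matrix (Fin n) (Fin n) ℝ)) *
        ((1 : Matrix (Fin m) (Fin m) ℝ) ⊗ₖ (Φ * W' * Φ'))
        = B ⊗ₖ (1 : Matrix (Fin n) (Fin n) ℝ) := by
      simp only [← Matrix.mul_kronecker_mul, Matrix.one_mul, Matrix.mul_one, hV1]
    rw [hb11, hb12, hb21, hb22]
  · intro c₁ c₂
    have he : (Matrix.diagonal fun jk : Fin m × Fin n => e jk.1)
        = Matrix.diagonal e ⊗ₖ (1 : Matrix (Fin n) (Fin n) ℝ) := by
      rw [show (1 : Matrix (Fin n) (Fin n) ℝ)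
          = Matrix.diagonal (fun _ => (1:ℝ)) from Matrix.diagonal_one.symm,
        Matrix.diagonal_kronecker_diagonal]
      apply congrArg Matrix.diagonal
      funext jk
      rw [mul_one]
    rw [← Matrix.fromBlocks_diagonal, ← Matrix.fromBlocks_diagonal, he, fromBlocks_conj]
    have hc1 : Matrix.fromBlocks W 0 0 W *
        Matrix.fromBlocks (Matrix.diagonal fun _ : Fin n => c₁) 0 0
          (Matrix.diagonal fun _ : Fin n => c₂) * Matrix.fromBlocks W' 0 0 W'
        = Matrix.fromBlocks (Matrix.diagonal fun _ : Fin n => c₁) 0 0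
          (Matrix.diagonal fun _ : Fin n => c₂) := by
      rw [fromBlocks_conj]
      simp only [Matrix.mul_zero, Matrix.zero_mul, conj_const_diag _ W W' hWW']
    have hc2 : ((1 : Matrix (Fin m) (Fin m) ℝ) ⊗ₖ (Φ' * W * Φ)) *
        (Matrix.diagonal e ⊗ₖ (1 : Matrix (Fin n) (Fin n) ℝ)) *
        ((1 : Matrix (Fin m) (Fin m) ℝ) ⊗ₖ (Φ * W' * Φ'))
        = Matrix.diagonal e ⊗ₖ (1 : Matrix (Fin n) (Fin n) ℝ) := by
      simp only [← Matrix.mul_kronecker_mul, Matrix.one_mul, Matrix.mul_one, hV1]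
    rw [hc1, hc2]
    simp only [Matrix.mul_zero, Matrix.zero_mul]

end Aux14e

namespace Aux14f
open Aux14c Aux14d Aux14e

variable {n m : ℕ}

lemma corona_L_charpoly (r : ℝ) (A A' : Matrix (Fin n) (Fin n) ℝ) (μ μ' : Fin n → ℝ)
    (hsq : Matrix.diagonal μ * Matrix.diagonal μ = 1)
    (hsq' : Matrix.diagonal μ' * Matrix.diagonal μ' = 1)
    (habs : ∀ i, |μ i| = 1) (habs' : ∀ i, |μ' i| = 1)
    (hrow : ∀ i, ∑ j, |A i j| = r) (hrow' : ∀ i, ∑ j, |A' i j| = r)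
    (W W' : Matrix (Fin n) (Fin n) ℝ) (hWW' : W * W' = 1) (hW'W : W' * W = 1)
    (hWAW' : W * A * W' = A')
    (B : Matrix (Fin m) (Fin m) ℝ) (ν : Fin m → ℝ) (hν : ∀ j, |ν j| = 1) :
    (degMat (coronaStar A B μ ν) - coronaStar A B μ ν).charpoly
      = (degMat (coronaStar A' B μ' ν) - coronaStar A' B μ' ν).charpoly := by
  obtain ⟨P, Q, hPQ, hQP, hC, hD⟩ :=
    corona_conj A A' μ μ' hsq hsq' W W' hWW' hW'W hWAW' B ν (fun j => 1 + ∑ j', |B j j'|)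
  have hD' := hD r (r + m)
  have hdeg : degMat (coronaStar A B μ ν) = Matrix.diagonal (Sum.elim
      (Sum.elim (fun _ : Fin n => r) (fun _ : Fin n => r + m))
      (fun jk : Fin m × Fin n => (fun j => 1 + ∑ j', |B j j'|) jk.1)) :=
    degMat_corona r A B μ ν hrow habs hν
  have hdeg' : degMat (coronaStar A' B μ' ν) = Matrix.diagonal (Sum.elim
      (Sum.elim (fun _ : Fin n => r) (fun _ : Fin n => r + m))
      (fun jk : Fin m × Fin n => (fun j => 1 + ∑ j', |B j j'|) jk.1)) :=
    degMat_corona r A' B μ' ν hrow' habs' hν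
  rw [hdeg, hdeg']
  have key : Matrix.diagonal (Sum.elim
      (Sum.elim (fun _ : Fin n => r) (fun _ : Fin n => r + m))
      (fun jk : Fin m × Fin n => (fun j => 1 + ∑ j', |B j j'|) jk.1)) - coronaStar A' B μ' ν
      = P * (Matrix.diagonal (Sum.elim
      (Sum.elim (fun _ : Fin n => r) (fun _ : Fin n => r + m))
      (fun jk : Fin m × Fin n => (fun j => 1 + ∑ j', |B j j'|) jk.1)) - coronaStar A B μ ν) * Q := by
    rw [Matrix.mul_sub, Matrix.sub_mul, hC, hD']
  rw [key, Aux14.charpoly_conj P Q _ hPQ]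

end Aux14f

/-- If `Γ₁, Γ₂` are `r`-regular of the same order `n` and their `μ`-signed
adjacency matrices are cospectral, then for every signed graph `Γ`, `Γ₁⊛Γ` and `Γ₂⊛Γ` are
Laplacian cospectral. -/
theorem corona_L_cospectral_left (n : ℕ) (r : ℝ)
    (A1 : Matrix (Fin n) (Fin n) ℝ) (hA1sym : A1.IsSymm) (hA1diag : ∀ i, A1 i i = 0)
    (hA1ent : ∀ i j, A1 i j = 1 ∨ A1 i j = 0 ∨ A1 i j = -1)
    (μ1 : Fin n → ℝ) (hμ1 : ∀ i, μ1 i = 1 ∨ μ1 i = -1)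
    (hreg1 : ∀ i, ∑ j, |A1 i j| = r)
    (A2 : Matrix (Fin n) (Fin n) ℝ) (hA2sym : A2.IsSymm) (hA2diag : ∀ i, A2 i i = 0)
    (hA2ent : ∀ i j, A2 i j = 1 ∨ A2 i j = 0 ∨ A2 i j = -1)
    (μ2 : Fin n → ℝ) (hμ2 : ∀ i, μ2 i = 1 ∨ μ2 i = -1)
    (hreg2 : ∀ i, ∑ j, |A2 i j| = r)
    (hcospec : (Matrix.diagonal μ1 * A1.map abs * Matrix.diagonal μ1).charpoly
      = (Matrix.diagonal μ2 * A2.map abs * Matrix.diagonal μ2).charpoly)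
    (m : ℕ) (B : Matrix (Fin m) (Fin m) ℝ) (hBsym : B.IsSymm) (hBdiag : ∀ i, B i i = 0)
    (hBent : ∀ i j, B i j = 1 ∨ B i j = 0 ∨ B i j = -1)
    (ν : Fin m → ℝ) (hν : ∀ i, ν i = 1 ∨ ν i = -1) :
    (degMat (coronaStar (Matrix.diagonal μ1 * A1.map abs * Matrix.diagonal μ1) B μ1 ν)
        - coronaStar (Matrix.diagonal μ1 * A1.map abs * Matrix.diagonal μ1) B μ1 ν).charpoly
      = (degMat (coronaStar (Matrix.diagonal μ2 * A2.map abs * Matrix.diagonal μ2) B μ2 ν)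
        - coronaStar (Matrix.diagonal μ2 * A2.map abs * Matrix.diagonal μ2) B μ2 ν).charpoly := by
  classical
  have habs1 : ∀ i, |μ1 i| = 1 := by
    intro i; rcases hμ1 i with h | h <;> rw [h] <;> norm_num
  have habs2 : ∀ i, |μ2 i| = 1 := by
    intro i; rcases hμ2 i with h | h <;> rw [h] <;> norm_num
  have habsν : ∀ j, |ν j| = 1 := by
    intro j; rcases hν j with h | h <;> rw [h] <;> norm_num
  have hsq1 : Matrix.diagonal μ1 * Matrix.diagonal μ1 = 1 := by
    rw [Matrix.diagonal_mul_diagonal]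
    rw [show (fun i => μ1 i * μ1 i) = fun _ => (1:ℝ) from funext fun i => by
      rcases hμ1 i with h | h <;> rw [h] <;> norm_num]
    exact Matrix.diagonal_one
  have hsq2 : Matrix.diagonal μ2 * Matrix.diagonal μ2 = 1 := by
    rw [Matrix.diagonal_mul_diagonal]
    rw [show (fun i => μ2 i * μ2 i) = fun _ => (1:ℝ) from funext fun i => by
      rcases hμ2 i with h | h <;> rw [h] <;> norm_num]
    exact Matrix.diagonal_one
  have hentry : ∀ (A : Matrix (Fin n) (Fin n) ℝ) (μ : Fin n → ℝ) (i j : Fin n),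
      (Matrix.diagonal μ * A.map abs * Matrix.diagonal μ) i j = μ i * |A i j| * μ j := by
    intro A μ i j
    rw [Matrix.mul_diagonal, Matrix.diagonal_mul, Matrix.map_apply]
  have hsymAux : ∀ (A : Matrix (Fin n) (Fin n) ℝ) (μ : Fin n → ℝ), A.IsSymm →
      (Matrix.diagonal μ * A.map abs * Matrix.diagonal μ).IsSymm := by
    intro A μ hA
    unfold Matrix.IsSymm
    ext i j
    rw [Matrix.transpose_apply, hentry, hentry]
    rw [show |A j i| = |A i j| from by rw [show A j i = A i j from by
      conv_lhs => rw [← hA]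
      rfl]]
    ring
  have hrowAux : ∀ (A : Matrix (Fin n) (Fin n) ℝ) (μ : Fin n → ℝ),
      (∀ i, |μ i| = 1) → (∀ i, ∑ j, |A i j| = r) →
      ∀ i, ∑ j, |(Matrix.diagonal μ * A.map abs * Matrix.diagonal μ) i j| = r := by
    intro A μ hμ hreg i
    rw [← hreg i]
    apply Finset.sum_congr rfl
    intro j _
    rw [hentry, abs_mul, abs_mul, hμ i, hμ j, abs_abs, one_mul, mul_one]
  have hSim := Aux14b.sim_of_isSymm_charpoly_eq
    (Matrix.diagonal μ1 * A1.map abs * Matrix.diagonal μ1)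
    (Matrix.diagonal μ2 * A2.map abs * Matrix.diagonal μ2)
    (hsymAux A1 μ1 hA1sym) (hsymAux A2 μ2 hA2sym) hcospec
  obtain ⟨W, W', hWW', hW'W, hWAW'⟩ := hSim
  exact Aux14f.corona_L_charpoly r _ _ μ1 μ2 hsq1 hsq2 habs1 habs2
    (hrowAux A1 μ1 habs1 hreg1) (hrowAux A2 μ2 habs2 hreg2)
    W W' hWW' hW'W hWAW'.symm B ν habsν
end

section
/- Let Γ be an r-regular signed graph (with marking), and let Γ1 and Γ2 be signed graphs of the same order n with markings μ1, μ2 such that L(Γ1) and L(Γ2) have the same characteristic polynomial and the signed Laplacian coronals agree, χ_{L(Γ1)}(x) = χ_{L(Γ2)}(x) for every real x at which both are defined. Then the Laplacian matrices L(Γ⊛Γ1) and L(Γ⊛Γ2) have the same characteristic polynomial, i.e., Γ⊛Γ1 and Γ⊛Γ2 are Laplacian cospectral. -/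
open Matrix Kronecker BigOperators

lemma degMat_corona {n m : ℕ} (A : Matrix (Fin n) (Fin n) ℝ) (μ : Fin n → ℝ)
    (hμ : ∀ i, |μ i| = 1)
    (B : Matrix (Fin m) (Fin m) ℝ) (ν : Fin m → ℝ) (hν : ∀ i, |ν i| = 1)
    (r : ℝ) (hregB : ∀ i, ∑ j, |B i j| = r) :
    degMat (coronaStar (Matrix.diagonal ν * B.map abs * Matrix.diagonal ν) A ν μ)
      = Matrix.fromBlocks
          (Matrix.fromBlocks (r • 1) 0 0 ((r + (n : ℝ)) • 1))
          0 0 ((degMat A + 1) ⊗ₖ (1 : Matrix (Fin m) (Fin m) ℝ)) := by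
  have hAν : ∀ i j, |(Matrix.diagonal ν * B.map abs * Matrix.diagonal ν) i j| = |B i j| := by
    intro i j
    simp [Matrix.mul_apply, Matrix.diagonal_apply, Finset.sum_ite_eq, Finset.sum_ite_eq',
      abs_mul, hμ, hν, abs_abs]
  ext i j
  rcases i with (i | i) | ⟨p, q⟩ <;> rcases j with (j | j) | ⟨p', q'⟩ <;>
    simp only [degMat, coronaStar, muBlock, Matrix.diagonal_apply, Matrix.fromBlocks_apply₁₁,
      Matrix.fromBlocks_apply₁₂, Matrix.fromBlocks_apply₂₁, Matrix.fromBlocks_apply₂₂,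
      Matrix.fromRows_apply_inl, Matrix.fromRows_apply_inr, Matrix.fromCols_apply_inl,
      Matrix.fromCols_apply_inr, Matrix.smul_apply, Matrix.one_apply, Matrix.zero_apply,
      Sum.inl.injEq, Sum.inr.injEq, Prod.mk.injEq, reduceCtorEq] <;>
    simp [Fintype.sum_sum_type, Fintype.sum_prod_type, Matrix.fromBlocks_apply₁₁,
      Matrix.fromBlocks_apply₁₂, Matrix.fromBlocks_apply₂₁, Matrix.fromBlocks_apply₂₂,
      Matrix.fromRows_apply_inl, Matrix.fromRows_apply_inr, Matrix.fromCols_apply_inl,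
      Matrix.fromCols_apply_inr, hAν, hregB, abs_mul, hμ, hν, Matrix.one_apply,
      Matrix.diagonal_apply, apply_ite abs, Finset.sum_ite_eq, Finset.sum_ite_eq',
      Matrix.kroneckerMap_apply, degMat, mul_comm]
  · have hcard : (Finset.filter (fun x : Fin n × Fin m => i = x.2) Finset.univ)
        = Finset.univ ×ˢ ({i} : Finset (Fin m)) := by
      ext ⟨a, b⟩; simp [eq_comm]
    simp [hcard, Finset.card_product]
  · split_ifs <;> simp_all [add_comm]

lemma big_shift {n m : ℕ} (A : Matrix (Fin n) (Fin n) ℝ) (μ : Fin n → ℝ)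
    (hμ : ∀ i, |μ i| = 1)
    (B : Matrix (Fin m) (Fin m) ℝ) (ν : Fin m → ℝ) (hν : ∀ i, |ν i| = 1)
    (r : ℝ) (hregB : ∀ i, ∑ j, |B i j| = r) (x : ℝ) :
    x • (1 : Matrix ((Fin m ⊕ Fin m) ⊕ Fin n × Fin m) ((Fin m ⊕ Fin m) ⊕ Fin n × Fin m) ℝ)
      - (degMat (coronaStar (Matrix.diagonal ν * B.map abs * Matrix.diagonal ν) A ν μ)
          - coronaStar (Matrix.diagonal ν * B.map abs * Matrix.diagonal ν) A ν μ)
    = Matrix.fromBlocks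
        (Matrix.fromBlocks ((x - r) • 1)
          (Matrix.diagonal ν * B.map abs * Matrix.diagonal ν)
          (Matrix.diagonal ν * B.map abs * Matrix.diagonal ν) ((x - r - (n : ℝ)) • 1))
        (Matrix.fromRows 0 (muBlock ν μ))
        (Matrix.fromCols 0 (muBlock ν μ)ᵀ)
        (((x - 1) • 1 - (degMat A - A)) ⊗ₖ (1 : Matrix (Fin m) (Fin m) ℝ)) := by
  rw [degMat_corona A μ hμ B ν hν r hregB]
  ext i j
  rcases i with (i | i) | ⟨p, q⟩ <;> rcases j with (j | j) | ⟨p', q'⟩ <;>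
    simp only [coronaStar, Matrix.fromBlocks_apply₁₁, Matrix.fromBlocks_apply₁₂,
      Matrix.fromBlocks_apply₂₁, Matrix.fromBlocks_apply₂₂, Matrix.sub_apply, Matrix.add_apply,
      Matrix.smul_apply, Matrix.one_apply, Matrix.zero_apply, Matrix.kroneckerMap_apply,
      Matrix.fromRows_apply_inl, Matrix.fromRows_apply_inr, Matrix.fromCols_apply_inl,
      Matrix.fromCols_apply_inr, degMat, Matrix.diagonal_apply, smul_eq_mul,
      Sum.inl.injEq, Sum.inr.injEq, Prod.mk.injEq, reduceCtorEq, if_false] <;>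
    first
      | ring1
      | (split_ifs <;> first | rfl | ring1 | tauto)

lemma muBlock_schur {n m : ℕ} (K : Matrix (Fin n) (Fin n) ℝ) (μ : Fin n → ℝ)
    (ν : Fin m → ℝ) (hν : ∀ i, ν i * ν i = 1) :
    muBlock ν μ * (K ⊗ₖ (1 : Matrix (Fin m) (Fin m) ℝ)) * (muBlock ν μ)ᵀ
      = (μ ⬝ᵥ (K *ᵥ μ)) • (1 : Matrix (Fin m) (Fin m) ℝ) := by
  ext i i'
  simp only [Matrix.mul_apply, Fintype.sum_prod_type, muBlock, Matrix.of_apply,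
    Matrix.transpose_apply, Matrix.kroneckerMap_apply, Matrix.diagonal_apply,
    Matrix.one_apply, Matrix.smul_apply, dotProduct, Matrix.mulVec, smul_eq_mul,
    mul_ite, ite_mul, mul_zero, zero_mul, mul_one, Finset.sum_ite_eq, Finset.sum_ite_eq',
    Finset.mem_univ, if_true]
  split_ifs with h
  · subst h
    simp only [Finset.sum_mul]
    rw [Finset.sum_comm]
    refine Finset.sum_congr rfl fun a _ => ?_
    rw [Finset.mul_sum]
    refine Finset.sum_congr rfl fun b _ => ?_
    linear_combination (μ a * K a b * μ b) * hν i
  · simp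

lemma evalCharpoly {k : Type} [Fintype k] [DecidableEq k] (M : Matrix k k ℝ) (x : ℝ) :
    M.charpoly.eval x = (x • (1 : Matrix k k ℝ) - M).det := by
  rw [Matrix.charpoly, ← Polynomial.coe_evalRingHom, RingHom.map_det]
  congr 1
  ext i j
  by_cases h : i = j <;>
    simp [Matrix.charmatrix_apply, Matrix.one_apply, h, Matrix.diagonal_apply]

lemma myFromBlocks_sub {l m n o : Type} [Fintype l] [Fintype m] [Fintype n] [Fintype o]
    (A : Matrix n l ℝ) (B : Matrix n m ℝ) (C : Matrix o l ℝ) (D : Matrix o m ℝ)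
    (A' : Matrix n l ℝ) (B' : Matrix n m ℝ) (C' : Matrix o l ℝ) (D' : Matrix o m ℝ) :
    Matrix.fromBlocks A B C D - Matrix.fromBlocks A' B' C' D'
      = Matrix.fromBlocks (A - A') (B - B') (C - C') (D - D') := by
  ext i j
  rcases i with i | i <;> rcases j with j | j <;> simp

lemma key {n m : ℕ} (A : Matrix (Fin n) (Fin n) ℝ) (μ : Fin n → ℝ) (hμ : ∀ i, |μ i| = 1)
    (B : Matrix (Fin m) (Fin m) ℝ) (ν : Fin m → ℝ) (hν : ∀ i, |ν i| = 1)
    (hν2 : ∀ i, ν i * ν i = 1)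
    (r : ℝ) (hregB : ∀ i, ∑ j, |B i j| = r) (x : ℝ)
    (hx : IsUnit ((x - 1) • (1 : Matrix (Fin n) (Fin n) ℝ) - (degMat A - A)).det) :
    (degMat (coronaStar (Matrix.diagonal ν * B.map abs * Matrix.diagonal ν) A ν μ)
        - coronaStar (Matrix.diagonal ν * B.map abs * Matrix.diagonal ν) A ν μ).charpoly.eval x
      = ((degMat A - A).charpoly.eval (x - 1)) ^ m *
        (Matrix.fromBlocks ((x - r) • 1)
          (Matrix.diagonal ν * B.map abs * Matrix.diagonal ν)
          (Matrix.diagonal ν * B.map abs * Matrix.diagonal ν)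
          ((x - r - (n : ℝ) - coronal (degMat A - A) μ (x - 1)) •
            (1 : Matrix (Fin m) (Fin m) ℝ))).det := by
  set N : Matrix (Fin n) (Fin n) ℝ := (x - 1) • 1 - (degMat A - A) with hN
  have hdetW : (N ⊗ₖ (1 : Matrix (Fin m) (Fin m) ℝ)).det = N.det ^ m := by
    rw [Matrix.det_kronecker]; simp
  have hWunit : IsUnit (N ⊗ₖ (1 : Matrix (Fin m) (Fin m) ℝ)).det := by
    rw [hdetW]; exact hx.pow m
  haveI : Invertible (N ⊗ₖ (1 : Matrix (Fin m) (Fin m) ℝ)) :=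
    (N ⊗ₖ (1 : Matrix (Fin m) (Fin m) ℝ)).invertibleOfIsUnitDet hWunit
  rw [evalCharpoly, big_shift A μ hμ B ν hν r hregB x, Matrix.det_fromBlocks₂₂,
    invOf_eq_nonsing_inv, Matrix.inv_kronecker, inv_one, hdetW,
    evalCharpoly (degMat A - A) (x - 1)]
  congr 1
  rw [Matrix.fromRows_mul, Matrix.fromRows_mul_fromCols, Matrix.zero_mul, Matrix.zero_mul,
    Matrix.zero_mul, muBlock_schur _ _ _ hν2]
  have hcor : coronal (degMat A - A) μ (x - 1) = μ ⬝ᵥ (N⁻¹ *ᵥ μ) := rfl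
  rw [hcor, Matrix.mul_zero, myFromBlocks_sub, ← hN, ← sub_smul]
  simp

/-- If `Γ` is `r`-regular, and `Γ₁, Γ₂` (of the same order `n`) are Laplacian
cospectral with equal signed Laplacian coronals wherever both are defined, then `Γ⊛Γ₁` and
`Γ⊛Γ₂` are Laplacian cospectral. -/
theorem corona_L_cospectral_right (n : ℕ)
    (A1 : Matrix (Fin n) (Fin n) ℝ) (hA1sym : A1.IsSymm) (hA1diag : ∀ i, A1 i i = 0)
    (hA1ent : ∀ i j, A1 i j = 1 ∨ A1 i j = 0 ∨ A1 i j = -1)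
    (μ1 : Fin n → ℝ) (hμ1 : ∀ i, μ1 i = 1 ∨ μ1 i = -1)
    (A2 : Matrix (Fin n) (Fin n) ℝ) (hA2sym : A2.IsSymm) (hA2diag : ∀ i, A2 i i = 0)
    (hA2ent : ∀ i j, A2 i j = 1 ∨ A2 i j = 0 ∨ A2 i j = -1)
    (μ2 : Fin n → ℝ) (hμ2 : ∀ i, μ2 i = 1 ∨ μ2 i = -1)
    (hcospec : (degMat A1 - A1).charpoly = (degMat A2 - A2).charpoly)
    (hcoronal : ∀ x : ℝ,
      IsUnit (x • (1 : Matrix (Fin n) (Fin n) ℝ) - (degMat A1 - A1)).det →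
      IsUnit (x • (1 : Matrix (Fin n) (Fin n) ℝ) - (degMat A2 - A2)).det →
      coronal (degMat A1 - A1) μ1 x = coronal (degMat A2 - A2) μ2 x)
    (m : ℕ) (r : ℝ) (B : Matrix (Fin m) (Fin m) ℝ) (hBsym : B.IsSymm)
    (hBdiag : ∀ i, B i i = 0)
    (hBent : ∀ i j, B i j = 1 ∨ B i j = 0 ∨ B i j = -1)
    (ν : Fin m → ℝ) (hν : ∀ i, ν i = 1 ∨ ν i = -1)
    (hregB : ∀ i, ∑ j, |B i j| = r) :
    (degMat (coronaStar (Matrix.diagonal ν * B.map abs * Matrix.diagonal ν) A1 ν μ1)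
        - coronaStar (Matrix.diagonal ν * B.map abs * Matrix.diagonal ν) A1 ν μ1).charpoly
      = (degMat (coronaStar (Matrix.diagonal ν * B.map abs * Matrix.diagonal ν) A2 ν μ2)
        - coronaStar (Matrix.diagonal ν * B.map abs * Matrix.diagonal ν) A2 ν μ2).charpoly := by
  have habsν : ∀ i, |ν i| = 1 := fun i => by rcases hν i with h | h <;> simp [h]
  have hν2 : ∀ i, ν i * ν i = 1 := fun i => by rcases hν i with h | h <;> simp [h]
  have habsμ1 : ∀ i, |μ1 i| = 1 := fun i => by rcases hμ1 i with h | h <;> simp [h]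
  have habsμ2 : ∀ i, |μ2 i| = 1 := fun i => by rcases hμ2 i with h | h <;> simp [h]
  set p := (degMat A1 - A1).charpoly with hp
  have hp0 : p ≠ 0 := (Matrix.charpoly_monic _).ne_zero
  have hSfin : Set.Finite {x : ℝ | p.eval (x - 1) = 0} := by
    have hsub : {x : ℝ | p.eval (x - 1) = 0} ⊆ (fun y => y + 1) '' {y | p.IsRoot y} :=
      fun x hx => ⟨x - 1, hx, by ring⟩
    exact ((Polynomial.finite_setOf_isRoot hp0).image _).subset hsub
  apply Polynomial.eq_of_infinite_eval_eq
  apply Set.Infinite.mono _ hSfin.infinite_compl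
  intro x hx
  have hx0 : p.eval (x - 1) ≠ 0 := hx
  have h1 : IsUnit ((x - 1) • (1 : Matrix (Fin n) (Fin n) ℝ) - (degMat A1 - A1)).det := by
    rw [← evalCharpoly]; exact isUnit_iff_ne_zero.mpr hx0
  have h2 : IsUnit ((x - 1) • (1 : Matrix (Fin n) (Fin n) ℝ) - (degMat A2 - A2)).det := by
    rw [← evalCharpoly, ← hcospec]; exact isUnit_iff_ne_zero.mpr hx0
  show _ = _
  rw [key A1 μ1 habsμ1 B ν habsν hν2 r hregB x h1,
      key A2 μ2 habsμ2 B ν habsν hν2 r hregB x h2, ← hcospec,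
      hcoronal (x - 1) h1 h2]
end
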